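/- arXiv:2404.17706 — 5 statements merged into one kernel-verified Lean document; each statement's English description precedes it below -/
import Mathlib

section
/- Uniqueness of mild solutions on a common interval (second part of Theorem 2.1): If U and V are both mild solutions of the delayed evolution problem on [0, t₀] with the same history g̃, then U(t) = V(t) for every t ∈ [0, t₀]. -/
open MeasureTheory intervalIntegral

variable {𝓗 : Type*} [NormedAddCommGroup 𝓗] [InnerProductSpace ℝ 𝓗] [CompleteSpace 𝓗]

/-- `U` is a mild solution on `[0, T]` of the delayed evolution problem
`U'(t) = 𝓐 U(t) - k(t) 𝓑 U(t - τ(t)) + F(U(t))` with history `g` on `[-τ̄, 0]`. -/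
def IsMildSolution (S : ℝ → 𝓗 →L[ℝ] 𝓗) (τbar : ℝ) (τ : ℝ → ℝ) (B : 𝓗 →L[ℝ] 𝓗)
    (k : ℝ → ℝ) (F : 𝓗 → 𝓗) (g : ℝ → 𝓗) (T : ℝ) (U : ℝ → 𝓗) : Prop :=
  ContinuousOn U (Set.Icc (-τbar) T) ∧
  (∀ s ∈ Set.Icc (-τbar) (0 : ℝ), U s = g s) ∧
  ∀ t ∈ Set.Icc (0 : ℝ) T,
    U t = S t (g 0) + ∫ s in (0 : ℝ)..t, S (t - s) (F (U s) - k s • B (U (s - τ s)))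

open Set Filter Topology

set_option linter.unusedSectionVars false

lemma scomp_contOn (S : ℝ → 𝓗 →L[ℝ] 𝓗) (M : ℝ)
    (hScont : ∀ x : 𝓗, ContinuousOn (fun t => S t x) (Set.Ici (0 : ℝ)))
    (hSb : ∀ t : ℝ, 0 ≤ t → ‖S t‖ ≤ M)
    {A : Set ℝ} {σ : ℝ → ℝ} {x : ℝ → 𝓗}
    (hσ : ContinuousOn σ A) (hσ0 : ∀ s ∈ A, 0 ≤ σ s) (hx : ContinuousOn x A) :
    ContinuousOn (fun s => S (σ s) (x s)) A := by
  intro s₀ hs₀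
  have h1 : ContinuousWithinAt (fun s => S (σ s) (x s₀)) A s₀ :=
    ((hScont (x s₀)) (σ s₀) (hσ0 s₀ hs₀)).comp (hσ s₀ hs₀) (fun s hs => hσ0 s hs)
  have h2 : Tendsto (fun s => S (σ s) (x s - x s₀)) (𝓝[A] s₀) (𝓝 0) := by
    have hxlim : Tendsto (fun s => M * ‖x s - x s₀‖) (𝓝[A] s₀) (𝓝 0) := by
      have : Tendsto (fun s => x s - x s₀) (𝓝[A] s₀) (𝓝 (x s₀ - x s₀)) :=
        (hx s₀ hs₀).sub tendsto_const_nhds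
      rw [sub_self] at this
      simpa using (this.norm.const_mul M)
    apply squeeze_zero_norm' _ hxlim
    filter_upwards [self_mem_nhdsWithin] with s hs
    calc ‖S (σ s) (x s - x s₀)‖ ≤ ‖S (σ s)‖ * ‖x s - x s₀‖ := (S (σ s)).le_opNorm _
      _ ≤ M * ‖x s - x s₀‖ :=
        mul_le_mul_of_nonneg_right (hSb _ (hσ0 s hs)) (norm_nonneg _)
  have heq : (fun s => S (σ s) (x s)) = fun s => S (σ s) (x s - x s₀) + S (σ s) (x s₀) := by
    funext s; rw [map_sub]; abel
  unfold ContinuousWithinAt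
  rw [heq]
  simpa using h2.add h1

lemma flip_contOn (F : 𝓗 → 𝓗) (L₀ r : ℝ)
    (hLip : ∀ x y : 𝓗, ‖x‖ ≤ r → ‖y‖ ≤ r → ‖F x - F y‖ ≤ L₀ * ‖x - y‖)
    {A : Set ℝ} {W : ℝ → 𝓗} (hW : ContinuousOn W A) (hWr : ∀ s ∈ A, ‖W s‖ ≤ r) :
    ContinuousOn (fun s => F (W s)) A := by
  intro s₀ hs₀
  have h2 : Tendsto (fun s => F (W s) - F (W s₀)) (𝓝[A] s₀) (𝓝 0) := by
    have hxlim : Tendsto (fun s => L₀ * ‖W s - W s₀‖) (𝓝[A] s₀) (𝓝 0) := by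
      have : Tendsto (fun s => W s - W s₀) (𝓝[A] s₀) (𝓝 (W s₀ - W s₀)) :=
        (hW s₀ hs₀).sub tendsto_const_nhds
      rw [sub_self] at this
      simpa using (this.norm.const_mul L₀)
    apply squeeze_zero_norm' _ hxlim
    filter_upwards [self_mem_nhdsWithin] with s hs
    exact hLip _ _ (hWr s hs) (hWr s₀ hs₀)
  unfold ContinuousWithinAt
  have := h2.add (tendsto_const_nhds (x := F (W s₀)))
  simpa using this

/-- **Uniqueness of mild solutions on a common interval (second part of Theorem 2.1).**
If `U` and `V` are both mild solutions on `[0, t₀]` with the same history `g`, then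
`U = V` on `[0, t₀]`. -/
theorem uniqueness_mild_solutions
    (S : ℝ → 𝓗 →L[ℝ] 𝓗) (M ω : ℝ) (τbar : ℝ) (τ : ℝ → ℝ) (B : 𝓗 →L[ℝ] 𝓗) (b : ℝ)
    (k : ℝ → ℝ) (F : 𝓗 → 𝓗) (L : ℝ → ℝ) (g : ℝ → 𝓗)
    (hM : 1 ≤ M) (hω : 0 < ω)
    (hS0 : S 0 = ContinuousLinearMap.id ℝ 𝓗)
    (hSsemi : ∀ t s : ℝ, 0 ≤ t → 0 ≤ s → S (t + s) = (S t).comp (S s))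
    (hScont : ∀ x : 𝓗, ContinuousOn (fun t => S t x) (Set.Ici (0 : ℝ)))
    (hSbound : ∀ t : ℝ, 0 ≤ t → ‖S t‖ ≤ M * Real.exp (-ω * t))
    (hτbar : 0 < τbar)
    (hτcont : ContinuousOn τ (Set.Ici (0 : ℝ)))
    (hτ : ∀ t : ℝ, 0 ≤ t → 0 ≤ τ t ∧ τ t ≤ τbar)
    (hb : 0 < b) (hB : ‖B‖ ≤ b ^ 2)
    (hk : LocallyIntegrableOn k (Set.Ici (-τbar)))
    (hF0 : F 0 = 0)
    (hL : ∀ r : ℝ, 0 < r → 0 < L r ∧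
      ∀ U V : 𝓗, ‖U‖ ≤ r → ‖V‖ ≤ r → ‖F U - F V‖ ≤ L r * ‖U - V‖)
    (hg : ContinuousOn g (Set.Icc (-τbar) 0))
    (t₀ : ℝ) (ht₀ : 0 < t₀) (U V : ℝ → 𝓗)
    (hU : IsMildSolution S τbar τ B k F g t₀ U)
    (hV : IsMildSolution S τbar τ B k F g t₀ V) :
    ∀ t ∈ Set.Icc (0 : ℝ) t₀, U t = V t := by
  obtain ⟨hUc, hUg, hUeq⟩ := hU
  obtain ⟨hVc, hVg, hVeq⟩ := hV
  have hIsub : Set.Icc (0 : ℝ) t₀ ⊆ Set.Icc (-τbar) t₀ :=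
    Set.Icc_subset_Icc_left (by linarith)
  -- uniform bound on solutions
  obtain ⟨C₁, hC₁⟩ := isCompact_Icc.exists_bound_of_continuousOn hUc
  obtain ⟨C₂, hC₂⟩ := isCompact_Icc.exists_bound_of_continuousOn hVc
  set r : ℝ := max (max C₁ C₂) 1 with hrdef
  have hr : (0 : ℝ) < r := lt_of_lt_of_le one_pos (le_max_right _ _)
  have hUr : ∀ s ∈ Set.Icc (-τbar) t₀, ‖U s‖ ≤ r := fun s hs =>
    (hC₁ s hs).trans ((le_max_left _ _).trans (le_max_left _ _))
  have hVr : ∀ s ∈ Set.Icc (-τbar) t₀, ‖V s‖ ≤ r := fun s hs =>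
    (hC₂ s hs).trans ((le_max_right _ _).trans (le_max_left _ _))
  obtain ⟨hL₀, hLip⟩ := hL r hr
  set L₀ : ℝ := L r with hL₀def
  have hM0 : (0 : ℝ) ≤ M := by linarith
  have hSb : ∀ t : ℝ, 0 ≤ t → ‖S t‖ ≤ M := by
    intro t ht
    refine (hSbound t ht).trans ?_
    have h1 : Real.exp (-ω * t) ≤ 1 := by
      rw [show (1 : ℝ) = Real.exp 0 by simp]
      exact Real.exp_le_exp.mpr (by nlinarith)
    nlinarith
  set Kf : ℝ → ℝ := fun s => M * (L₀ + b ^ 2 * ‖k s‖) with hKfdef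
  have hKf0 : ∀ s, 0 ≤ Kf s := by
    intro s
    have h1 : (0 : ℝ) ≤ b ^ 2 * ‖k s‖ := by positivity
    have : (0 : ℝ) ≤ L₀ + b ^ 2 * ‖k s‖ := by linarith
    exact mul_nonneg hM0 this
  have hkIcc : IntegrableOn k (Set.Icc (0 : ℝ) t₀) :=
    hk.integrableOn_compact_subset
      (fun x hx => le_trans (by linarith : -τbar ≤ (0:ℝ)) hx.1) isCompact_Icc
  have hKfIcc : IntegrableOn Kf (Set.Icc (0 : ℝ) t₀) := by
    have h1 : IntegrableOn (fun s => L₀ + b ^ 2 * ‖k s‖) (Set.Icc (0 : ℝ) t₀) := by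
      exact (integrableOn_const measure_Icc_lt_top.ne).add
        ((hkIcc.norm).const_mul (b ^ 2))
    exact h1.const_mul M
  -- zero difference on the history interval
  have hhist : ∀ s ∈ Set.Icc (-τbar) (0:ℝ), U s - V s = 0 := by
    intro s hs; rw [hUg s hs, hVg s hs, sub_self]
  -- location of delayed argument
  have hdelay : ∀ s : ℝ, 0 ≤ s → s ≤ t₀ → s - τ s ∈ Set.Icc (-τbar) t₀ := by
    intro s h0 h1
    obtain ⟨hτ1, hτ2⟩ := hτ s h0
    exact ⟨by linarith, by linarith⟩
  -- KEY a priori bound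
  have key : ∀ t ∈ Set.Icc (0:ℝ) t₀, ∀ a ∈ Set.Icc (0:ℝ) t,
      (∀ s ∈ Set.Ico (0:ℝ) a, U s = V s) →
      ∀ D : ℝ, 0 ≤ D → (∀ s ∈ Set.Icc (0:ℝ) t, ‖U s - V s‖ ≤ D) →
      ‖U t - V t‖ ≤ (∫ s in a..t, Kf s) * D := by
    rintro t ⟨ht0, htt₀⟩ a ⟨ha0, hat⟩ hprev D hD hDb
    have hsubI : Set.Icc (0:ℝ) t ⊆ Set.Icc (-τbar) t₀ :=
      Set.Icc_subset_Icc (by linarith) htt₀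
    have hστ : ContinuousOn (fun s => s - τ s) (Set.Icc (0:ℝ) t) :=
      continuousOn_id.sub (hτcont.mono (fun s hs => hs.1))
    have hτmap : ∀ s ∈ Set.Icc (0:ℝ) t, s - τ s ∈ Set.Icc (-τbar) t₀ :=
      fun s hs => hdelay s hs.1 (le_trans hs.2 htt₀)
    have hσc : ContinuousOn (fun s => t - s) (Set.Icc (0:ℝ) t) :=
      (continuous_const.sub continuous_id).continuousOn
    have hσ0 : ∀ s ∈ Set.Icc (0:ℝ) t, 0 ≤ t - s := fun s hs => by linarith [hs.2]
    have intgr : ∀ W : ℝ → 𝓗, ContinuousOn W (Set.Icc (-τbar) t₀) →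
        (∀ s ∈ Set.Icc (-τbar) t₀, ‖W s‖ ≤ r) →
        IntervalIntegrable (fun s => S (t - s) (F (W s) - k s • B (W (s - τ s))))
          volume 0 t := by
      intro W hWc hWr
      have hFW : ContinuousOn (fun s => F (W s)) (Set.Icc (0:ℝ) t) :=
        flip_contOn F L₀ r hLip (hWc.mono hsubI) (fun s hs => hWr s (hsubI hs))
      have hterm1 : ContinuousOn (fun s => S (t - s) (F (W s))) (Set.Icc (0:ℝ) t) :=
        scomp_contOn S M hScont hSb hσc hσ0 hFW
      have hWτ : ContinuousOn (fun s => W (s - τ s)) (Set.Icc (0:ℝ) t) :=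
        hWc.comp hστ hτmap
      have hGc : ContinuousOn (fun s => S (t - s) (B (W (s - τ s)))) (Set.Icc (0:ℝ) t) :=
        scomp_contOn S M hScont hSb hσc hσ0 (B.continuous.comp_continuousOn hWτ)
      have hGb : ∀ s ∈ Set.Icc (0:ℝ) t, ‖S (t - s) (B (W (s - τ s)))‖ ≤ M * (b^2 * r) := by
        intro s hs
        have h1 : ‖B (W (s - τ s))‖ ≤ b^2 * r := by
          calc ‖B (W (s - τ s))‖ ≤ ‖B‖ * ‖W (s - τ s)‖ := B.le_opNorm _
            _ ≤ b^2 * r := mul_le_mul hB (hWr _ (hτmap s hs)) (norm_nonneg _) (by positivity)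
        calc ‖S (t - s) (B (W (s - τ s)))‖
            ≤ ‖S (t - s)‖ * ‖B (W (s - τ s))‖ := (S (t - s)).le_opNorm _
          _ ≤ M * (b^2 * r) := mul_le_mul (hSb _ (hσ0 s hs)) h1 (norm_nonneg _) hM0
      have hkIoc : IntegrableOn k (Set.Ioc (0:ℝ) t) :=
        (hkIcc.mono_set (Set.Icc_subset_Icc le_rfl htt₀)).mono_set Set.Ioc_subset_Icc_self
      have hterm2 : IntegrableOn (fun s => k s • S (t - s) (B (W (s - τ s))))
          (Set.Ioc (0:ℝ) t) := by
        apply Integrable.mono' ((hkIoc.norm).mul_const (M * (b^2*r)))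
        · exact hkIoc.aestronglyMeasurable.smul
            ((hGc.mono Set.Ioc_subset_Icc_self).aestronglyMeasurable measurableSet_Ioc)
        · rw [ae_restrict_iff' measurableSet_Ioc]
          filter_upwards with s hs
          rw [norm_smul]
          exact mul_le_mul_of_nonneg_left (hGb s ⟨le_of_lt hs.1, hs.2⟩) (norm_nonneg _)
      have heq : (fun s => S (t - s) (F (W s) - k s • B (W (s - τ s)))) =
          fun s => S (t - s) (F (W s)) - k s • S (t - s) (B (W (s - τ s))) := by
        funext s; rw [map_sub, (S (t - s)).map_smul]
      rw [heq]
      refine IntervalIntegrable.sub ?_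
        ((intervalIntegrable_iff_integrableOn_Ioc_of_le ht0).mpr hterm2)
      apply ContinuousOn.intervalIntegrable
      rwa [Set.uIcc_of_le ht0]
    have hfU := intgr U hUc hUr
    have hfV := intgr V hVc hVr
    have hUV : U t - V t = ∫ s in (0:ℝ)..t,
        (S (t - s) (F (U s) - k s • B (U (s - τ s))) -
         S (t - s) (F (V s) - k s • B (V (s - τ s)))) := by
      rw [hUeq t ⟨ht0, htt₀⟩, hVeq t ⟨ht0, htt₀⟩, intervalIntegral.integral_sub hfU hfV]
      abel
    have hGeq : ∀ s : ℝ,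
        S (t - s) (F (U s) - k s • B (U (s - τ s))) -
          S (t - s) (F (V s) - k s • B (V (s - τ s)))
        = S (t - s) ((F (U s) - F (V s)) - k s • B (U (s - τ s) - V (s - τ s))) := by
      intro s
      rw [← map_sub]
      congr 1
      rw [map_sub B, smul_sub]
      abel
    set GG : ℝ → 𝓗 := fun s =>
      S (t - s) ((F (U s) - F (V s)) - k s • B (U (s - τ s) - V (s - τ s))) with hGGdef
    have hUV' : U t - V t = ∫ s in (0:ℝ)..t, GG s := by
      rw [hUV]
      exact intervalIntegral.integral_congr (fun s _ => hGeq s)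
    have hGint : IntervalIntegrable GG volume 0 t := by
      have h1 := hfU.sub hfV
      have h2 : (fun s => S (t - s) (F (U s) - k s • B (U (s - τ s))) -
          S (t - s) (F (V s) - k s • B (V (s - τ s)))) = GG := funext hGeq
      rwa [h2] at h1
    have hGzero : ∀ s ∈ Set.Ico (0:ℝ) a, GG s = 0 := by
      intro s hs
      have hs' : s ∈ Set.Icc (0:ℝ) t := ⟨hs.1, le_trans (le_of_lt hs.2) hat⟩
      have h1 : U s = V s := hprev s hs
      have h2 : U (s - τ s) = V (s - τ s) := by
        rcases lt_or_ge (s - τ s) 0 with hc | hc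
        · have hmem : s - τ s ∈ Set.Icc (-τbar) (0:ℝ) := ⟨(hτmap s hs').1, hc.le⟩
          rw [hUg _ hmem, hVg _ hmem]
        · exact hprev _ ⟨hc, lt_of_le_of_lt (by linarith [(hτ s hs.1).1]) hs.2⟩
      rw [hGGdef]
      simp [h1, h2]
    have hsplit : (∫ s in (0:ℝ)..t, GG s) = ∫ s in a..t, GG s := by
      have hi1 : IntervalIntegrable GG volume 0 a := hGint.mono_set
        (by rw [Set.uIcc_of_le ha0, Set.uIcc_of_le ht0]; exact Set.Icc_subset_Icc le_rfl hat)
      have hi2 : IntervalIntegrable GG volume a t := hGint.mono_set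
        (by rw [Set.uIcc_of_le hat, Set.uIcc_of_le ht0]; exact Set.Icc_subset_Icc ha0 le_rfl)
      have hane : ∀ᵐ s : ℝ, s ≠ a := by
        rw [MeasureTheory.ae_iff]
        have : {s : ℝ | ¬ s ≠ a} = {a} := by ext x; simp
        rw [this]
        exact Real.volume_singleton
      have h0a : (∫ s in (0:ℝ)..a, GG s) = 0 := by
        rw [intervalIntegral.integral_of_le ha0]
        apply MeasureTheory.integral_eq_zero_of_ae
        filter_upwards [ae_restrict_mem measurableSet_Ioc,
          MeasureTheory.ae_restrict_of_ae hane] with s hsm hne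
        exact hGzero s ⟨le_of_lt hsm.1, lt_of_le_of_ne hsm.2 hne⟩
      rw [← intervalIntegral.integral_add_adjacent_intervals hi1 hi2, h0a, zero_add]
    rw [hUV', hsplit]
    have hineq : ∀ᵐ s ∂(volume.restrict (Set.uIoc a t)), ‖GG s‖ ≤ Kf s * D := by
      rw [Set.uIoc_of_le hat, ae_restrict_iff' measurableSet_Ioc]
      filter_upwards with s hs
      have hs' : s ∈ Set.Icc (0:ℝ) t := ⟨le_trans ha0 (le_of_lt hs.1), hs.2⟩
      have hsI : s ∈ Set.Icc (-τbar) t₀ := hsubI hs'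
      have hF : ‖F (U s) - F (V s)‖ ≤ L₀ * D :=
        le_trans (hLip _ _ (hUr s hsI) (hVr s hsI))
          (mul_le_mul_of_nonneg_left (hDb s hs') hL₀.le)
      have hΔτ : ‖U (s - τ s) - V (s - τ s)‖ ≤ D := by
        rcases lt_or_ge (s - τ s) 0 with hc | hc
        · have hmem : s - τ s ∈ Set.Icc (-τbar) (0:ℝ) := ⟨(hτmap s hs').1, hc.le⟩
          rw [hhist _ hmem, norm_zero]; exact hD
        · exact hDb _ ⟨hc, by linarith [(hτ s hs'.1).1, hs'.2]⟩
      have hBτ : ‖k s • B (U (s - τ s) - V (s - τ s))‖ ≤ ‖k s‖ * (b^2 * D) := by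
        rw [norm_smul]
        refine mul_le_mul_of_nonneg_left ?_ (norm_nonneg (k s))
        calc ‖B (U (s - τ s) - V (s - τ s))‖
            ≤ ‖B‖ * ‖U (s - τ s) - V (s - τ s)‖ := B.le_opNorm _
          _ ≤ b^2 * D := mul_le_mul hB hΔτ (norm_nonneg _) (by positivity)
      calc ‖GG s‖ ≤ ‖S (t - s)‖ *
          ‖(F (U s) - F (V s)) - k s • B (U (s - τ s) - V (s - τ s))‖ :=
            (S (t - s)).le_opNorm _
        _ ≤ M * (L₀ * D + ‖k s‖ * (b^2 * D)) := by
            refine mul_le_mul (hSb _ (hσ0 s hs')) ?_ (norm_nonneg _) hM0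
            exact le_trans (norm_sub_le _ _) (add_le_add hF hBτ)
        _ = Kf s * D := by rw [hKfdef]; ring
    have hKfint : IntervalIntegrable (fun s => Kf s * D) volume a t := by
      apply (intervalIntegrable_iff_integrableOn_Ioc_of_le hat).mpr
      exact (hKfIcc.mono_set
        (fun x hx => ⟨le_trans ha0 (le_of_lt hx.1), le_trans hx.2 htt₀⟩)).mul_const D
    calc ‖∫ s in a..t, GG s‖ ≤ |∫ s in a..t, Kf s * D| :=
        intervalIntegral.norm_integral_le_abs_of_norm_le hineq hKfint
      _ = (∫ s in a..t, Kf s) * D := by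
          rw [intervalIntegral.integral_mul_const, abs_of_nonneg]
          exact mul_nonneg (intervalIntegral.integral_nonneg hat (fun s _ => hKf0 s)) hD
  -- the set on which the solutions agree
  set A : Set ℝ := {x | x ∈ Set.Icc (0:ℝ) t₀ ∧ ∀ s ∈ Set.Icc (0:ℝ) x, U s = V s} with hAdef
  have h0A : (0 : ℝ) ∈ A := by
    refine ⟨⟨le_refl 0, le_of_lt ht₀⟩, ?_⟩
    intro s hs
    have : s = 0 := le_antisymm hs.2 hs.1
    subst this
    rw [hUg 0 ⟨by linarith, le_refl 0⟩, hVg 0 ⟨by linarith, le_refl 0⟩]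
  have hAne : A.Nonempty := ⟨0, h0A⟩
  have hAbdd : BddAbove A := ⟨t₀, fun x hx => hx.1.2⟩
  set T : ℝ := sSup A with hTdef
  have hT0 : 0 ≤ T := le_csSup hAbdd h0A
  have hTt₀ : T ≤ t₀ := csSup_le hAne fun x hx => hx.1.2
  have hTprev : ∀ s ∈ Set.Ico (0:ℝ) T, U s = V s := by
    intro s ⟨hs0, hsT⟩
    obtain ⟨x, hxA, hsx⟩ := exists_lt_of_lt_csSup hAne hsT
    exact hxA.2 s ⟨hs0, le_of_lt hsx⟩
  have hTeq : U T = V T := by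
    have hDb : ∀ s ∈ Set.Icc (0:ℝ) T, ‖U s - V s‖ ≤ ‖U T - V T‖ := by
      intro s hs
      rcases lt_or_eq_of_le hs.2 with h | h
      · rw [hTprev s ⟨hs.1, h⟩, sub_self, norm_zero]; exact norm_nonneg _
      · subst h; exact le_refl _
    have := key T ⟨hT0, hTt₀⟩ T ⟨hT0, le_refl T⟩ hTprev (‖U T - V T‖)
      (norm_nonneg _) hDb
    rw [intervalIntegral.integral_same, zero_mul] at this
    rw [← sub_eq_zero]
    exact norm_le_zero_iff.mp this
  have hTA : T ∈ A := by
    refine ⟨⟨hT0, hTt₀⟩, ?_⟩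
    intro s hs
    rcases lt_or_eq_of_le hs.2 with h | h
    · exact hTprev s ⟨hs.1, h⟩
    · subst h; exact hTeq
  -- T must equal t₀
  have hTfin : T = t₀ := by
    by_contra hne
    have hTlt : T < t₀ := lt_of_le_of_ne hTt₀ hne
    -- find δ with ∫_{T}^{T+δ} Kf ≤ 1/2
    have hKT : IntegrableOn Kf (Set.Icc T t₀) :=
      hKfIcc.mono_set (Set.Icc_subset_Icc_left hT0)
    have hP : ContinuousOn (fun x => ∫ s in Set.Ioc T x, Kf s) (Set.Icc T t₀) :=
      intervalIntegral.continuousOn_primitive hKT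
    have hP0 : (∫ s in Set.Ioc T T, Kf s) = 0 := by simp
    obtain ⟨δ, hδpos, hδ⟩ : ∃ δ > 0, ∀ x ∈ Set.Icc T t₀, |x - T| < δ →
        |(∫ s in Set.Ioc T x, Kf s)| < 1/2 := by
      have := (hP T ⟨le_refl T, hTt₀⟩)
      rw [Metric.continuousWithinAt_iff] at this
      obtain ⟨δ, hδpos, hδ⟩ := this (1/2) (by norm_num)
      refine ⟨δ, hδpos, fun x hx hxd => ?_⟩
      have := hδ hx (by simpa [Real.dist_eq] using hxd)
      simpa [hP0, Real.dist_eq] using this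
    set t₁ : ℝ := min (T + δ/2) t₀ with ht₁def
    have ht₁T : T < t₁ := lt_min (by linarith) hTlt
    have ht₁t₀ : t₁ ≤ t₀ := min_le_right _ _
    have ht₁δ : t₁ - T < δ := by
      have : t₁ ≤ T + δ/2 := min_le_left _ _
      linarith
    have hhalf : ∀ u ∈ Set.Icc T t₁, (∫ s in T..u, Kf s) ≤ 1/2 := by
      intro u hu
      have h1 : |(∫ s in Set.Ioc T u, Kf s)| < 1/2 := by
        apply hδ u ⟨hu.1, le_trans hu.2 ht₁t₀⟩
        rw [abs_of_nonneg (by linarith [hu.1])]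
        linarith [hu.2]
      rw [intervalIntegral.integral_of_le hu.1]
      calc (∫ s in Set.Ioc T u, Kf s) ≤ |(∫ s in Set.Ioc T u, Kf s)| := le_abs_self _
        _ ≤ 1/2 := le_of_lt h1
    -- max of the difference on [0, t₁]
    have hWcont : ContinuousOn (fun s => ‖U s - V s‖) (Set.Icc (0:ℝ) t₁) := by
      have : Set.Icc (0:ℝ) t₁ ⊆ Set.Icc (-τbar) t₀ :=
        Set.Icc_subset_Icc (by linarith) ht₁t₀
      exact ((hUc.mono this).sub (hVc.mono this)).norm
    obtain ⟨x₁, hx₁mem, hx₁max⟩ := isCompact_Icc.exists_isMaxOn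
      ⟨0, ⟨le_refl 0, by linarith⟩⟩ hWcont
    set D : ℝ := ‖U x₁ - V x₁‖ with hDdef
    have hD0 : 0 ≤ D := norm_nonneg _
    have hDb : ∀ s ∈ Set.Icc (0:ℝ) t₁, ‖U s - V s‖ ≤ D := fun s hs => hx₁max hs
    have hD0' : D = 0 := by
      rcases le_or_gt x₁ T with hc | hc
      · have := hTA.2 x₁ ⟨hx₁mem.1, hc⟩
        rw [hDdef, this, sub_self, norm_zero]
      · have hx₁I : x₁ ∈ Set.Icc (0:ℝ) t₀ := ⟨hx₁mem.1, le_trans hx₁mem.2 ht₁t₀⟩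
        have hTx : T ∈ Set.Icc (0:ℝ) x₁ := ⟨hT0, le_of_lt hc⟩
        have hDb' : ∀ s ∈ Set.Icc (0:ℝ) x₁, ‖U s - V s‖ ≤ D := fun s hs =>
          hDb s ⟨hs.1, le_trans hs.2 hx₁mem.2⟩
        have := key x₁ hx₁I T hTx hTprev D hD0 hDb'
        have hint : (∫ s in T..x₁, Kf s) ≤ 1/2 := hhalf x₁ ⟨le_of_lt hc, hx₁mem.2⟩
        have hintnn : 0 ≤ ∫ s in T..x₁, Kf s :=
          intervalIntegral.integral_nonneg (le_of_lt hc) (fun s _ => hKf0 s)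
        have hDD : D ≤ (1/2) * D := by
          calc D ≤ (∫ s in T..x₁, Kf s) * D := this
            _ ≤ (1/2) * D := mul_le_mul_of_nonneg_right hint hD0
        linarith
    -- hence t₁ ∈ A, contradicting T = sSup A
    have ht₁A : t₁ ∈ A := by
      refine ⟨⟨by linarith, ht₁t₀⟩, fun s hs => ?_⟩
      have := hDb s hs
      rw [hD0'] at this
      rw [← sub_eq_zero]
      exact norm_le_zero_iff.mp this
    have := le_csSup hAbdd ht₁A
    rw [← hTdef] at this
    linarith
  intro t ht
  exact hTA.2 t (hTfin ▸ ht)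
end

section
/- Exponential decay of bounded mild solutions (Theorem 3.1): Assume in addition that there is K > 0 with ∫_{t−τ̄}^{t} |k(s)| ds < K for all t ≥ 0, and that there exist γ ∈ ℝ and ω′ ∈ [0, ω) such that b² M e^{ωτ̄} ∫₀ᵗ |k(s)| ds ≤ γ + ω′ t for all t ≥ 0. Let U be a mild solution on [0, T] with ‖U(t)‖ ≤ C for all t ∈ [0, T], for some C > 0 with L(C) < (ω − ω′)/M. Then for all t ∈ [0, T]: ‖U(t)‖ ≤ M e^{γ} ( ‖U₀‖ + e^{ωτ̄} K b² · max_{r ∈ [−τ̄,0]} e^{ωr}‖g̃(r)‖ ) · e^{−(ω − ω′ − M L(C)) t}. -/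
open MeasureTheory intervalIntegral

variable {𝓗 : Type*} [NormedAddCommGroup 𝓗] [InnerProductSpace ℝ 𝓗] [CompleteSpace 𝓗]

theorem gronwall_cont {T A ε : ℝ} (hε : 0 < ε) {h φ : ℝ → ℝ}
    (hh : Continuous h) (hh0 : ∀ s, 0 ≤ h s)
    (hφ : ContinuousOn φ (Set.Icc 0 T))
    (hineq : ∀ t ∈ Set.Icc (0:ℝ) T, φ t ≤ A - ε + ∫ s in (0:ℝ)..t, h s * φ s) :
    ∀ t ∈ Set.Icc (0:ℝ) T, φ t ≤ A * Real.exp (∫ s in (0:ℝ)..t, h s) := by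
  set H : ℝ → ℝ := fun t => ∫ s in (0:ℝ)..t, h s with hHdef
  have hHcont : Continuous H := intervalIntegral.continuous_primitive
    (fun a b => hh.intervalIntegrable a b) 0
  have hΨcont : Continuous fun u => A * Real.exp (H u) :=
    continuous_const.mul (Real.continuous_exp.comp hHcont)
  have hΨderiv : ∀ s : ℝ, HasDerivAt (fun u => A * Real.exp (H u))
      (h s * (A * Real.exp (H s))) s := by
    intro s
    have h1 : HasDerivAt H (h s) s := (hh.integral_hasStrictDerivAt 0 s).hasDerivAt
    have h2 := (h1.exp).const_mul A
    rw [show h s * (A * Real.exp (H s)) = A * (Real.exp (H s) * h s) by ring]; exact h2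
  have hH0 : H 0 = 0 := by simp [hHdef]
  by_contra hcon
  push_neg at hcon
  obtain ⟨t₁, ht₁, ht₁'⟩ := hcon
  set E : Set ℝ := Set.Icc 0 T ∩ {t | 0 ≤ φ t - A * Real.exp (H t)} with hEdef
  have hEne : E.Nonempty := ⟨t₁, ht₁, by simp only [Set.mem_setOf_eq, sub_nonneg]; exact ht₁'.le⟩
  have hEclosed : IsClosed E := by
    apply ContinuousOn.preimage_isClosed_of_isClosed
      (f := fun t => φ t - A * Real.exp (H t)) (t := Set.Ici 0)
    · exact hφ.sub hΨcont.continuousOn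
    · exact isClosed_Icc
    · exact isClosed_Ici
  have hEbdd : BddBelow E := ⟨0, fun x hx => hx.1.1⟩
  set t₀ : ℝ := sInf E with ht₀def
  have ht₀E : t₀ ∈ E := hEclosed.csInf_mem hEne hEbdd
  have ht₀Icc : t₀ ∈ Set.Icc (0:ℝ) T := ht₀E.1
  have ht₀ge : A * Real.exp (H t₀) ≤ φ t₀ := sub_nonneg.1 ht₀E.2
  have ht₀pos : 0 < t₀ := by
    rcases lt_or_eq_of_le ht₀Icc.1 with h0 | h0
    · exact h0
    · exfalso
      have h1 := hineq 0 (Set.left_mem_Icc.2 (h0.le.trans ht₀Icc.2))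
      rw [intervalIntegral.integral_same] at h1
      have : A * Real.exp (H 0) ≤ φ 0 := h0 ▸ ht₀ge
      rw [hH0, Real.exp_zero, mul_one] at this
      linarith
  -- on [0, t₀), φ < A exp H; hence on Ico 0 t₀, pointwise bound for the integrand
  have hbelow : ∀ s ∈ Set.Ico (0:ℝ) t₀, φ s ≤ A * Real.exp (H s) := by
    intro s hs
    by_contra hgt
    push_neg at hgt
    have hsE : s ∈ E := ⟨⟨hs.1, hs.2.le.trans ht₀Icc.2⟩, by
      simp only [Set.mem_setOf_eq, sub_nonneg]; exact hgt.le⟩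
    exact absurd (csInf_le hEbdd hsE) (not_le.2 hs.2)
  -- integrability
  have hφint : IntervalIntegrable φ volume 0 t₀ :=
    (hφ.mono (by rw [Set.uIcc_of_le ht₀Icc.1]; exact Set.Icc_subset_Icc le_rfl ht₀Icc.2)).intervalIntegrable
  have hhφint : IntervalIntegrable (fun s => h s * φ s) volume 0 t₀ :=
    (hh.intervalIntegrable 0 t₀).mul_continuousOn
      (hφ.mono (by rw [Set.uIcc_of_le ht₀Icc.1]; exact Set.Icc_subset_Icc le_rfl ht₀Icc.2))
  have hΨint : IntervalIntegrable (fun s => h s * (A * Real.exp (H s))) volume 0 t₀ :=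
    (hh.mul hΨcont).intervalIntegrable 0 t₀
  -- FTC
  have hFTC : ∫ s in (0:ℝ)..t₀, h s * (A * Real.exp (H s))
      = A * Real.exp (H t₀) - A := by
    have := intervalIntegral.integral_eq_sub_of_hasDerivAt
      (f := fun u => A * Real.exp (H u)) (f' := fun s => h s * (A * Real.exp (H s)))
      (fun s _ => hΨderiv s) hΨint
    rw [this, hH0, Real.exp_zero, mul_one]
  -- monotonicity of the integral using a.e. bound (the endpoint t₀ is null)
  have hmono : (∫ s in (0:ℝ)..t₀, h s * φ s)
      ≤ ∫ s in (0:ℝ)..t₀, h s * (A * Real.exp (H s)) := by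
    apply intervalIntegral.integral_mono_ae_restrict ht₀pos.le hhφint hΨint
    have hIco : ∀ᵐ s ∂(volume.restrict (Set.Icc (0:ℝ) t₀)), s ∈ Set.Ico (0:ℝ) t₀ := by
      have : (volume.restrict (Set.Icc (0:ℝ) t₀)) {t₀} = 0 := by
        rw [Measure.restrict_apply (measurableSet_singleton _)]
        exact measure_mono_null Set.inter_subset_left (measure_singleton _)
      filter_upwards [ae_restrict_mem measurableSet_Icc,
        measure_eq_zero_iff_ae_notMem.1 this] with s hs hs'
      exact ⟨hs.1, lt_of_le_of_ne hs.2 (by simpa using hs')⟩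
    filter_upwards [hIco] with s hs
    exact mul_le_mul_of_nonneg_left (hbelow s hs) (hh0 s)
  have hfinal := hineq t₀ ht₀Icc
  rw [hFTC] at hmono
  linarith

theorem gronwall_integral {T a : ℝ} (hT : 0 ≤ T) (ha : 0 ≤ a) {h φ : ℝ → ℝ}
    (hh : IntegrableOn h (Set.Icc 0 T)) (hh0 : ∀ s, 0 ≤ h s)
    (hφ : ContinuousOn φ (Set.Icc 0 T))
    (hineq : ∀ t ∈ Set.Icc (0:ℝ) T, φ t ≤ a + ∫ s in (0:ℝ)..t, h s * φ s) :
    ∀ t ∈ Set.Icc (0:ℝ) T, φ t ≤ a * Real.exp (∫ s in (0:ℝ)..t, h s) := by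
  intro t ht
  obtain ⟨B, hB⟩ := (isCompact_Icc (a := (0:ℝ)) (b := T)).exists_bound_of_continuousOn hφ
  have hB0 : 0 ≤ B := le_trans (norm_nonneg _) (hB 0 (Set.left_mem_Icc.2 hT))
  have hhsub : ∀ t' : ℝ, t' ∈ Set.Icc (0:ℝ) T → IntervalIntegrable h volume 0 t' := by
    intro t' ht'
    rw [intervalIntegrable_iff_integrableOn_Icc_of_le ht'.1]
    exact hh.mono_set (Set.Icc_subset_Icc le_rfl ht'.2)
  have hφsub : ∀ t' : ℝ, t' ∈ Set.Icc (0:ℝ) T → ContinuousOn φ (Set.uIcc 0 t') := by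
    intro t' ht'
    rw [Set.uIcc_of_le ht'.1]
    exact hφ.mono (Set.Icc_subset_Icc le_rfl ht'.2)
  -- key approximation claim
  have key : ∀ ε : ℝ, 0 < ε →
      φ t ≤ (a + B * ε + ε) * Real.exp ((∫ s in (0:ℝ)..t, h s) + ε) := by
    intro ε hε
    set f : ℝ → ℝ := (Set.Icc (0:ℝ) T).indicator h with hfdef
    have hf : Integrable f volume := by
      rw [hfdef, integrable_indicator_iff measurableSet_Icc]; exact hh
    obtain ⟨g, -, hg1, hgc, hgint⟩ := hf.exists_hasCompactSupport_integral_sub_le hε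
    set h' : ℝ → ℝ := fun s => max (g s) 0 with h'def
    have hh'c : Continuous h' := hgc.max continuous_const
    have hh'0 : ∀ s, 0 ≤ h' s := fun s => le_max_right _ _
    -- pointwise comparison on Icc 0 T
    have hptw : ∀ s ∈ Set.Icc (0:ℝ) T, |h s - h' s| ≤ ‖f s - g s‖ := by
      intro s hs
      have hfs : f s = h s := Set.indicator_of_mem hs h
      rw [Real.norm_eq_abs, hfs]
      rcases le_or_gt 0 (g s) with hg0 | hg0
      · rw [show h' s = g s from max_eq_left hg0]
      · rw [show h' s = 0 from max_eq_right hg0.le, sub_zero, abs_of_nonneg (hh0 s)]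
        have : h s - g s ≤ |h s - g s| := le_abs_self _
        linarith
    -- L¹ distance on subintervals
    have hdiffint : ∀ t' : ℝ, t' ∈ Set.Icc (0:ℝ) T →
        IntervalIntegrable (fun s => |h s - h' s|) volume 0 t' := fun t' ht' =>
      ((hhsub t' ht').sub (hh'c.intervalIntegrable 0 t')).abs
    have hdiff : ∀ t' : ℝ, t' ∈ Set.Icc (0:ℝ) T →
        (∫ s in (0:ℝ)..t', |h s - h' s|) ≤ ε := by
      intro t' ht'
      rw [intervalIntegral.integral_of_le ht'.1]
      have h1 : (∫ s in Set.Ioc (0:ℝ) t', |h s - h' s|) ≤ ∫ s in Set.Ioc (0:ℝ) t', ‖f s - g s‖ := by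
        apply setIntegral_mono_on
        · exact (intervalIntegrable_iff_integrableOn_Ioc_of_le ht'.1).1 (hdiffint t' ht')
        · exact (hf.sub hgint).norm.integrableOn
        · exact measurableSet_Ioc
        · intro s hs
          exact hptw s ⟨hs.1.le, hs.2.trans ht'.2⟩
      have h2 : (∫ s in Set.Ioc (0:ℝ) t', ‖f s - g s‖) ≤ ∫ s, ‖f s - g s‖ :=
        setIntegral_le_integral (hf.sub hgint).norm (ae_of_all _ fun s => norm_nonneg _)
      linarith
    -- transfer the integral inequality to h'
    have hineq2 : ∀ t' ∈ Set.Icc (0:ℝ) T,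
        φ t' ≤ (a + B * ε + ε) - ε + ∫ s in (0:ℝ)..t', h' s * φ s := by
      intro t' ht'
      have h1 : (∫ s in (0:ℝ)..t', h s * φ s)
          ≤ ∫ s in (0:ℝ)..t', (h' s * φ s + |h s - h' s| * B) := by
        apply intervalIntegral.integral_mono_on ht'.1
        · exact (hhsub t' ht').mul_continuousOn (hφsub t' ht')
        · exact ((hh'c.intervalIntegrable 0 t').mul_continuousOn (hφsub t' ht')).add
            ((hdiffint t' ht').mul_const B)
        · intro s hs
          have hBs := hB s ⟨hs.1, hs.2.trans ht'.2⟩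
          rw [Real.norm_eq_abs] at hBs
          have : (h s - h' s) * φ s ≤ |h s - h' s| * B := by
            calc (h s - h' s) * φ s ≤ |(h s - h' s) * φ s| := le_abs_self _
            _ = |h s - h' s| * |φ s| := abs_mul _ _
            _ ≤ |h s - h' s| * B := by
                exact mul_le_mul_of_nonneg_left hBs (abs_nonneg _)
          nlinarith [this]
      have h2 : (∫ s in (0:ℝ)..t', (h' s * φ s + |h s - h' s| * B))
          = (∫ s in (0:ℝ)..t', h' s * φ s) + (∫ s in (0:ℝ)..t', |h s - h' s|) * B := by
        rw [intervalIntegral.integral_add ((hh'c.intervalIntegrable 0 t').mul_continuousOn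
          (hφsub t' ht')) ((hdiffint t' ht').mul_const B), intervalIntegral.integral_mul_const]
      have h3 : (∫ s in (0:ℝ)..t', |h s - h' s|) * B ≤ ε * B :=
        mul_le_mul_of_nonneg_right (hdiff t' ht') hB0
      have h4 := hineq t' ht'
      rw [h2] at h1
      have : φ t' ≤ a + ((∫ s in (0:ℝ)..t', h' s * φ s) + ε * B) := by linarith
      linarith [this]
    have hmain := gronwall_cont hε hh'c hh'0 hφ hineq2 t ht
    -- compare exponents
    have hexp : (∫ s in (0:ℝ)..t, h' s) ≤ (∫ s in (0:ℝ)..t, h s) + ε := by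
      have h1 : (∫ s in (0:ℝ)..t, h' s) ≤ ∫ s in (0:ℝ)..t, (h s + |h s - h' s|) := by
        apply intervalIntegral.integral_mono_on ht.1
        · exact hh'c.intervalIntegrable 0 t
        · exact (hhsub t ht).add (hdiffint t ht)
        · intro s hs
          have : h' s - h s ≤ |h s - h' s| := by
            rw [abs_sub_comm]; exact le_abs_self _
          linarith
      rw [intervalIntegral.integral_add (hhsub t ht) (hdiffint t ht)] at h1
      linarith [hdiff t ht]
    calc φ t ≤ (a + B * ε + ε) * Real.exp (∫ s in (0:ℝ)..t, h' s) := hmain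
      _ ≤ (a + B * ε + ε) * Real.exp ((∫ s in (0:ℝ)..t, h s) + ε) := by
          apply mul_le_mul_of_nonneg_left (Real.exp_le_exp.2 hexp)
          positivity
  -- pass to the limit ε → 0⁺
  set I : ℝ := ∫ s in (0:ℝ)..t, h s with hIdef
  have hFt : Filter.Tendsto (fun ε : ℝ => (a + B * ε + ε) * Real.exp (I + ε))
      (nhdsWithin 0 (Set.Ioi 0)) (nhds (a * Real.exp I)) := by
    have hc : Continuous fun ε : ℝ => (a + B * ε + ε) * Real.exp (I + ε) := by
      fun_prop
    have := (hc.tendsto 0).mono_left (nhdsWithin_le_nhds (s := Set.Ioi (0:ℝ)))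
    simpa using this
  exact ge_of_tendsto hFt (Filter.eventually_of_mem self_mem_nhdsWithin
    (fun ε hε => key ε hε))

set_option maxHeartbeats 2000000 in
/-- **Exponential decay of bounded mild solutions (Theorem 3.1).** Under the uniform bound
`∫_{t-τ̄}^t |k| < K` and the growth condition `b² M e^{ωτ̄} ∫₀ᵗ |k| ≤ γ + ω' t`, any mild
solution on `[0, T]` that is bounded by a constant `C` with `L(C) < (ω - ω')/M` satisfies
the exponential decay estimate. -/
theorem exponential_decay_bounded_mild_solutions
    (S : ℝ → 𝓗 →L[ℝ] 𝓗) (M ω : ℝ) (τbar : ℝ) (τ : ℝ → ℝ) (B : 𝓗 →L[ℝ] 𝓗) (b : ℝ)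
    (k : ℝ → ℝ) (F : 𝓗 → 𝓗) (L : ℝ → ℝ) (g : ℝ → 𝓗)
    (hM : 1 ≤ M) (hω : 0 < ω)
    (hS0 : S 0 = ContinuousLinearMap.id ℝ 𝓗)
    (hSsemi : ∀ t s : ℝ, 0 ≤ t → 0 ≤ s → S (t + s) = (S t).comp (S s))
    (hScont : ∀ x : 𝓗, ContinuousOn (fun t => S t x) (Set.Ici (0 : ℝ)))
    (hSbound : ∀ t : ℝ, 0 ≤ t → ‖S t‖ ≤ M * Real.exp (-ω * t))
    (hτbar : 0 < τbar)
    (hτcont : ContinuousOn τ (Set.Ici (0 : ℝ)))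
    (hτ : ∀ t : ℝ, 0 ≤ t → 0 ≤ τ t ∧ τ t ≤ τbar)
    (hb : 0 < b) (hB : ‖B‖ ≤ b ^ 2)
    (hk : LocallyIntegrableOn k (Set.Ici (-τbar)))
    (hF0 : F 0 = 0)
    (hL : ∀ r : ℝ, 0 < r → 0 < L r ∧
      ∀ U V : 𝓗, ‖U‖ ≤ r → ‖V‖ ≤ r → ‖F U - F V‖ ≤ L r * ‖U - V‖)
    (hg : ContinuousOn g (Set.Icc (-τbar) 0))
    (K : ℝ) (hK : 0 < K)
    (hkK : ∀ t : ℝ, 0 ≤ t → ∫ s in (t - τbar)..t, |k s| < K)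
    (γ ω' : ℝ) (hω'0 : 0 ≤ ω') (hω'ω : ω' < ω)
    (hγ : ∀ t : ℝ, 0 ≤ t →
      b ^ 2 * M * Real.exp (ω * τbar) * ∫ s in (0 : ℝ)..t, |k s| ≤ γ + ω' * t)
    (T : ℝ) (hT : 0 < T) (U : ℝ → 𝓗)
    (hU : IsMildSolution S τbar τ B k F g T U)
    (C : ℝ) (hC : 0 < C) (hLC : L C < (ω - ω') / M)
    (hUbound : ∀ t ∈ Set.Icc (0 : ℝ) T, ‖U t‖ ≤ C) :
    ∀ t ∈ Set.Icc (0 : ℝ) T,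
      ‖U t‖ ≤ M * Real.exp γ *
          (‖g 0‖ + Real.exp (ω * τbar) * K * b ^ 2 *
            sSup ((fun r => Real.exp (ω * r) * ‖g r‖) '' Set.Icc (-τbar) (0 : ℝ))) *
          Real.exp (-(ω - ω' - M * L C) * t) := by
  obtain ⟨hUcont, hUhist, hUmild⟩ := hU
  obtain ⟨hLC0, hLip⟩ := hL C hC
  have hM0 : (0:ℝ) < M := lt_of_lt_of_le one_pos hM
  set G : ℝ := sSup ((fun r => Real.exp (ω * r) * ‖g r‖) '' Set.Icc (-τbar) (0 : ℝ)) with hGdef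
  have hmem0 : (0:ℝ) ∈ Set.Icc (-τbar) (0:ℝ) := ⟨by linarith, le_rfl⟩
  have hGimgcont : ContinuousOn (fun r => Real.exp (ω * r) * ‖g r‖) (Set.Icc (-τbar) (0:ℝ)) :=
    (Real.continuous_exp.comp (continuous_const.mul continuous_id)).continuousOn.mul hg.norm
  have hGbdd : BddAbove ((fun r => Real.exp (ω * r) * ‖g r‖) '' Set.Icc (-τbar) (0:ℝ)) :=
    (isCompact_Icc.image_of_continuousOn hGimgcont).bddAbove
  have hGle : ∀ r ∈ Set.Icc (-τbar) (0:ℝ), Real.exp (ω * r) * ‖g r‖ ≤ G :=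
    fun r hr => le_csSup hGbdd (Set.mem_image_of_mem _ hr)
  have hG0 : 0 ≤ G := le_trans (by positivity) (hGle 0 hmem0)
  set c : ℝ := M * b ^ 2 * Real.exp (ω * τbar) with hcdef
  have hc0 : 0 < c := by positivity
  set v : ℝ → ℝ := fun t => Real.exp (ω * t) * ‖U t‖ with hvdef
  have hsubI : Set.Icc (0:ℝ) T ⊆ Set.Icc (-τbar) T := Set.Icc_subset_Icc (by linarith) le_rfl
  have hvcont : ContinuousOn v (Set.Icc (0:ℝ) T) :=
    (Real.continuous_exp.comp (continuous_const.mul continuous_id)).continuousOn.mul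
      ((hUcont.mono hsubI).norm)
  have hv0 : ∀ t, 0 ≤ v t := fun t => by positivity
  have hvbound : ∀ r ∈ Set.Icc (0:ℝ) T, v r ≤ Real.exp (ω * T) * C := by
    intro r hr
    apply mul_le_mul (Real.exp_le_exp.2 (by nlinarith [hr.2])) (hUbound r hr) (norm_nonneg _)
      (Real.exp_pos _).le
  -- the running sup
  set m : ℝ → ℝ := fun s => max 0 (min s T) with hmdef
  have hmIcc : ∀ s, m s ∈ Set.Icc (0:ℝ) T :=
    fun s => ⟨le_max_left _ _, max_le hT.le (min_le_right _ _)⟩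
  have hmeq : ∀ s ∈ Set.Icc (0:ℝ) T, m s = s := by
    intro s hs
    simp only [hmdef, min_eq_left hs.2, max_eq_right hs.1]
  set w : ℝ → ℝ := fun s => sSup (v '' Set.Icc 0 (m s)) with hwdef
  have himgne : ∀ s : ℝ, (v '' Set.Icc 0 (m s)).Nonempty :=
    fun s => ⟨v 0, Set.mem_image_of_mem _ ⟨le_rfl, (hmIcc s).1⟩⟩
  have himgbdd : ∀ s : ℝ, BddAbove (v '' Set.Icc 0 (m s)) := by
    intro s
    refine ⟨Real.exp (ω * T) * C, ?_⟩
    rintro x ⟨r, hr, rfl⟩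
    exact hvbound r ⟨hr.1, hr.2.trans (hmIcc s).2⟩
  have hwmono : Monotone w := by
    intro s s' hss'
    apply csSup_le_csSup (himgbdd s') (himgne s)
    apply Set.image_mono
    apply Set.Icc_subset_Icc le_rfl
    exact max_le_max le_rfl (min_le_min hss' le_rfl)
  have hwv : ∀ s ∈ Set.Icc (0:ℝ) T, ∀ r ∈ Set.Icc (0:ℝ) s, v r ≤ w s := by
    intro s hs r hr
    apply le_csSup (himgbdd s)
    exact Set.mem_image_of_mem _ (by rw [hmeq s hs]; exact hr)
  have hw0 : ∀ s, 0 ≤ w s := by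
    intro s
    exact le_trans (hv0 0) (le_csSup (himgbdd s) (Set.mem_image_of_mem _ ⟨le_rfl, (hmIcc s).1⟩))
  have hwB : ∀ s, w s ≤ Real.exp (ω * T) * C := by
    intro s
    apply csSup_le (himgne s)
    rintro x ⟨r, hr, rfl⟩
    exact hvbound r ⟨hr.1, hr.2.trans (hmIcc s).2⟩
  have hwmeas : Measurable w := hwmono.measurable
  -- the coefficient
  set Lc : ℝ := L C with hLcdef
  set h : ℝ → ℝ := fun s => M * Lc + c * |k s| with hhdef
  have hh0 : ∀ s, 0 ≤ h s := by
    intro s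
    have : 0 ≤ c * |k s| := by positivity
    have : 0 < M * Lc := by positivity
    simp only [hhdef]; linarith
  -- integrability facts
  have hkIccT : IntegrableOn k (Set.Icc (0:ℝ) T) :=
    hk.integrableOn_compact_subset (Set.Icc_subset_Ici_iff (by linarith) |>.2 (by linarith))
      isCompact_Icc
  have hkIccτ : IntegrableOn k (Set.Icc (0:ℝ) τbar) :=
    hk.integrableOn_compact_subset (Set.Icc_subset_Ici_iff (by linarith) |>.2 (by linarith))
      isCompact_Icc
  have hkIT : ∀ t ∈ Set.Icc (0:ℝ) T, IntervalIntegrable k volume 0 t := by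
    intro t ht
    rw [intervalIntegrable_iff_integrableOn_Icc_of_le ht.1]
    exact hkIccT.mono_set (Set.Icc_subset_Icc le_rfl ht.2)
  have hhIccT : IntegrableOn h (Set.Icc (0:ℝ) T) := by
    apply Integrable.add
    · exact integrableOn_const measure_Icc_lt_top.ne
    · exact hkIccT.abs.const_mul c
  have hhIT : ∀ t ∈ Set.Icc (0:ℝ) T, IntervalIntegrable h volume 0 t := by
    intro t ht
    rw [intervalIntegrable_iff_integrableOn_Icc_of_le ht.1]
    exact hhIccT.mono_set (Set.Icc_subset_Icc le_rfl ht.2)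
  have hhwIccT : IntegrableOn (fun s => h s * w s) (Set.Icc (0:ℝ) T) := by
    have h1 : IntegrableOn (fun s => w s * h s) (Set.Icc (0:ℝ) T) := by
      apply Integrable.bdd_mul (c := Real.exp (ω * T) * C) hhIccT
        hwmeas.aestronglyMeasurable
      apply ae_of_all
      intro s
      rw [Real.norm_eq_abs, abs_of_nonneg (hw0 s)]
      exact hwB s
    exact h1.congr_fun (fun s _ => mul_comm _ _) measurableSet_Icc
  have hhwIT : ∀ t ∈ Set.Icc (0:ℝ) T, IntervalIntegrable (fun s => h s * w s) volume 0 t := by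
    intro t ht
    rw [intervalIntegrable_iff_integrableOn_Icc_of_le ht.1]
    exact hhwIccT.mono_set (Set.Icc_subset_Icc le_rfl ht.2)
  -- the indicator function for the history part
  set χ : ℝ → ℝ := fun s => if s < τbar then G else 0 with hχdef
  have hχ0 : ∀ s, 0 ≤ χ s := by
    intro s
    simp only [hχdef]
    split <;> [exact hG0; exact le_rfl]
  have hχmeas : Measurable χ := Measurable.ite measurableSet_Iio measurable_const measurable_const
  have hkχIccT : IntegrableOn (fun s => c * |k s| * χ s) (Set.Icc (0:ℝ) T) := by
    have h1 : IntegrableOn (fun s => χ s * (c * |k s|)) (Set.Icc (0:ℝ) T) := by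
      apply Integrable.bdd_mul (c := G) ((hkIccT.abs.const_mul c))
        hχmeas.aestronglyMeasurable
      apply ae_of_all
      intro s
      rw [Real.norm_eq_abs, abs_of_nonneg (hχ0 s)]
      simp only [hχdef]
      split <;> [exact le_rfl; exact hG0]
    exact h1.congr_fun (fun s _ => mul_comm _ _) measurableSet_Icc
  have hkχIT : ∀ t ∈ Set.Icc (0:ℝ) T, IntervalIntegrable (fun s => c * |k s| * χ s) volume 0 t := by
    intro t ht
    rw [intervalIntegrable_iff_integrableOn_Icc_of_le ht.1]
    exact hkχIccT.mono_set (Set.Icc_subset_Icc le_rfl ht.2)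
  -- continuity of the shifted solution
  have hUτmaps : ∀ s ∈ Set.Icc (0:ℝ) T, s - τ s ∈ Set.Icc (-τbar) T := by
    intro s hs
    obtain ⟨hτ1, hτ2⟩ := hτ s hs.1
    constructor <;> [linarith [hs.1]; linarith [hs.2]]
  have hUτcont : ContinuousOn (fun s => U (s - τ s)) (Set.Icc (0:ℝ) T) := by
    apply hUcont.comp
    · exact (continuousOn_id.sub (hτcont.mono (fun x hx => hx.1)))
    · exact hUτmaps
  set a : ℝ := M * ‖g 0‖ + c * G * K with hadef
  have hcore : ∀ t ∈ Set.Icc (0:ℝ) T, v t ≤ a + ∫ s in (0:ℝ)..t, h s * w s := by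
    intro t ht
    have hIccsub : Set.Icc (0:ℝ) t ⊆ Set.Icc (0:ℝ) T := Set.Icc_subset_Icc le_rfl ht.2
    set bnd : ℝ → ℝ := fun s => M * Lc * Real.exp (-ω * (t - s)) * ‖U s‖
      + |k s| * (M * b ^ 2 * Real.exp (-ω * (t - s)) * ‖U (s - τ s)‖) with hbnddef
    have hcont1 : ContinuousOn (fun s => M * Lc * Real.exp (-ω * (t - s)) * ‖U s‖)
        (Set.uIcc (0:ℝ) t) := by
      rw [Set.uIcc_of_le ht.1]
      exact (Continuous.continuousOn (by fun_prop)).mul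
        (((hUcont.mono hsubI).mono hIccsub).norm)
    have hcont2 : ContinuousOn (fun s => M * b ^ 2 * Real.exp (-ω * (t - s)) * ‖U (s - τ s)‖)
        (Set.uIcc (0:ℝ) t) := by
      rw [Set.uIcc_of_le ht.1]
      exact (Continuous.continuousOn (by fun_prop)).mul
        ((hUτcont.mono hIccsub).norm)
    have hbndint : IntervalIntegrable bnd volume 0 t := by
      apply IntervalIntegrable.add
      · exact hcont1.intervalIntegrable
      · exact ((hkIT t ht).abs).mul_continuousOn hcont2
    have hae : ∀ᵐ s ∂volume.restrict (Set.uIoc (0:ℝ) t),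
        ‖S (t - s) (F (U s) - k s • B (U (s - τ s)))‖ ≤ bnd s := by
      filter_upwards [ae_restrict_mem measurableSet_uIoc] with s hs
      rw [Set.uIoc_of_le ht.1] at hs
      have hs0 : (0:ℝ) ≤ s := hs.1.le
      have hst : s ≤ t := hs.2
      have hsT : s ∈ Set.Icc (0:ℝ) T := ⟨hs0, hst.trans ht.2⟩
      have h1 : ‖S (t - s)‖ ≤ M * Real.exp (-ω * (t - s)) := hSbound _ (by linarith)
      have h2 : ‖F (U s)‖ ≤ Lc * ‖U s‖ := by
        have h2' := hLip (U s) 0 (hUbound s hsT) (by simp [hC.le])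
        simpa [hF0] using h2'
      have h3 : ‖B (U (s - τ s))‖ ≤ b ^ 2 * ‖U (s - τ s)‖ :=
        le_trans (B.le_opNorm _) (mul_le_mul_of_nonneg_right hB (norm_nonneg _))
      have h4 : ‖F (U s) - k s • B (U (s - τ s))‖
          ≤ Lc * ‖U s‖ + |k s| * (b ^ 2 * ‖U (s - τ s)‖) := by
        calc ‖F (U s) - k s • B (U (s - τ s))‖
            ≤ ‖F (U s)‖ + ‖k s • B (U (s - τ s))‖ := norm_sub_le _ _
          _ = ‖F (U s)‖ + |k s| * ‖B (U (s - τ s))‖ := by rw [norm_smul, Real.norm_eq_abs]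
          _ ≤ Lc * ‖U s‖ + |k s| * (b ^ 2 * ‖U (s - τ s)‖) := by
              have := mul_le_mul_of_nonneg_left h3 (abs_nonneg (k s))
              linarith
      calc ‖S (t - s) (F (U s) - k s • B (U (s - τ s)))‖
          ≤ ‖S (t - s)‖ * ‖F (U s) - k s • B (U (s - τ s))‖ := (S (t - s)).le_opNorm _
        _ ≤ (M * Real.exp (-ω * (t - s))) * (Lc * ‖U s‖ + |k s| * (b ^ 2 * ‖U (s - τ s)‖)) := by
            apply mul_le_mul h1 h4 (norm_nonneg _) (by positivity)
        _ = bnd s := by simp only [hbnddef]; ring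
    have hnorm : ‖∫ s in (0:ℝ)..t, S (t - s) (F (U s) - k s • B (U (s - τ s)))‖
        ≤ ∫ s in (0:ℝ)..t, bnd s := by
      have := intervalIntegral.norm_integral_le_abs_of_norm_le hae hbndint
      rwa [abs_of_nonneg (intervalIntegral.integral_nonneg ht.1
        (fun u _ => by positivity))] at this
    have hSg : ‖S t (g 0)‖ ≤ M * Real.exp (-ω * t) * ‖g 0‖ := by
      calc ‖S t (g 0)‖ ≤ ‖S t‖ * ‖g 0‖ := (S t).le_opNorm _
        _ ≤ M * Real.exp (-ω * t) * ‖g 0‖ :=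
            mul_le_mul_of_nonneg_right (hSbound t ht.1) (norm_nonneg _)
    have hUt : ‖U t‖ ≤ M * Real.exp (-ω * t) * ‖g 0‖ + ∫ s in (0:ℝ)..t, bnd s := by
      rw [hUmild t ht]
      exact le_trans (norm_add_le _ _) (add_le_add hSg hnorm)
    -- multiply by exp(ω t)
    have hvt : v t ≤ M * ‖g 0‖ + ∫ s in (0:ℝ)..t, Real.exp (ω * t) * bnd s := by
      have he : Real.exp (ω * t) * Real.exp (-ω * t) = 1 := by
        rw [← Real.exp_add]; norm_num
      have := mul_le_mul_of_nonneg_left hUt (Real.exp_pos (ω * t)).le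
      calc v t = Real.exp (ω * t) * ‖U t‖ := rfl
        _ ≤ Real.exp (ω * t) * (M * Real.exp (-ω * t) * ‖g 0‖ + ∫ s in (0:ℝ)..t, bnd s) := this
        _ = M * ‖g 0‖ + Real.exp (ω * t) * ∫ s in (0:ℝ)..t, bnd s := by
            rw [mul_add, show Real.exp (ω * t) * (M * Real.exp (-ω * t) * ‖g 0‖)
              = (Real.exp (ω * t) * Real.exp (-ω * t)) * (M * ‖g 0‖) from by ring, he, one_mul]
        _ = M * ‖g 0‖ + ∫ s in (0:ℝ)..t, Real.exp (ω * t) * bnd s := by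
            rw [intervalIntegral.integral_const_mul]
    -- pointwise estimate of the integrand
    have hptw : ∀ s ∈ Set.Icc (0:ℝ) t,
        Real.exp (ω * t) * bnd s ≤ h s * w s + c * |k s| * χ s := by
      intro s hs
      have hsT : s ∈ Set.Icc (0:ℝ) T := hIccsub hs
      have hs0 : (0:ℝ) ≤ s := hs.1
      have hst : s ≤ t := hs.2
      obtain ⟨hτ1, hτ2⟩ := hτ s hs.1
      have he : Real.exp (ω * t) * Real.exp (-ω * (t - s)) = Real.exp (ω * s) := by
        rw [← Real.exp_add]; ring_nf
      have heq : Real.exp (ω * t) * bnd s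
          = M * Lc * (Real.exp (ω * s) * ‖U s‖)
            + |k s| * (M * b ^ 2 * (Real.exp (ω * s) * ‖U (s - τ s)‖)) := by
        simp only [hbnddef]
        rw [← he]; ring
      have hvw : Real.exp (ω * s) * ‖U s‖ ≤ w s := hwv s hsT s ⟨hs.1, le_rfl⟩
      have hdelay : Real.exp (ω * s) * ‖U (s - τ s)‖ ≤ Real.exp (ω * τbar) * (χ s + w s) := by
        have hr : Real.exp (ω * s) = Real.exp (ω * τ s) * Real.exp (ω * (s - τ s)) := by
          rw [← Real.exp_add]; ring_nf
        have hτe : Real.exp (ω * τ s) ≤ Real.exp (ω * τbar) :=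
          Real.exp_le_exp.2 (mul_le_mul_of_nonneg_left hτ2 hω.le)
        rcases lt_or_ge (s - τ s) 0 with hneg | hpos
        · have hUg : U (s - τ s) = g (s - τ s) := hUhist _ ⟨by linarith, hneg.le⟩
          have hGb : Real.exp (ω * (s - τ s)) * ‖g (s - τ s)‖ ≤ G :=
            hGle _ ⟨by linarith, hneg.le⟩
          have hχs : χ s = G := if_pos (by linarith : s < τbar)
          calc Real.exp (ω * s) * ‖U (s - τ s)‖
              = Real.exp (ω * τ s) * (Real.exp (ω * (s - τ s)) * ‖g (s - τ s)‖) := by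
                rw [hUg, hr]; ring
            _ ≤ Real.exp (ω * τbar) * G := by
                apply mul_le_mul hτe hGb (by positivity) (Real.exp_pos _).le
            _ ≤ Real.exp (ω * τbar) * (χ s + w s) := by
                rw [hχs]
                exact mul_le_mul_of_nonneg_left (by linarith [hw0 s]) (Real.exp_pos _).le
        · have hvrw : Real.exp (ω * (s - τ s)) * ‖U (s - τ s)‖ ≤ w s :=
            hwv s hsT (s - τ s) ⟨hpos, by linarith⟩
          calc Real.exp (ω * s) * ‖U (s - τ s)‖
              = Real.exp (ω * τ s) * (Real.exp (ω * (s - τ s)) * ‖U (s - τ s)‖) := by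
                rw [hr]; ring
            _ ≤ Real.exp (ω * τbar) * w s := by
                apply mul_le_mul hτe hvrw (by positivity) (Real.exp_pos _).le
            _ ≤ Real.exp (ω * τbar) * (χ s + w s) :=
                mul_le_mul_of_nonneg_left (by linarith [hχ0 s]) (Real.exp_pos _).le
      have hdelay2 : |k s| * (M * b ^ 2 * (Real.exp (ω * s) * ‖U (s - τ s)‖))
          ≤ c * |k s| * χ s + c * |k s| * w s := by
        have h5 : M * b ^ 2 * (Real.exp (ω * s) * ‖U (s - τ s)‖)
            ≤ M * b ^ 2 * (Real.exp (ω * τbar) * (χ s + w s)) :=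
          mul_le_mul_of_nonneg_left hdelay (by positivity)
        have h6 := mul_le_mul_of_nonneg_left h5 (abs_nonneg (k s))
        calc |k s| * (M * b ^ 2 * (Real.exp (ω * s) * ‖U (s - τ s)‖))
            ≤ |k s| * (M * b ^ 2 * (Real.exp (ω * τbar) * (χ s + w s))) := h6
          _ = c * |k s| * χ s + c * |k s| * w s := by simp only [hcdef]; ring
      have hvw2 : M * Lc * (Real.exp (ω * s) * ‖U s‖) ≤ M * Lc * w s :=
        mul_le_mul_of_nonneg_left hvw (by positivity)
      rw [heq]
      have hexp : h s * w s = M * Lc * w s + c * |k s| * w s := by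
        simp only [hhdef]; ring
      linarith [hvw2, hdelay2, hexp.ge, hexp.le]
    -- integrate the pointwise estimate
    have hint2 : (∫ s in (0:ℝ)..t, Real.exp (ω * t) * bnd s)
        ≤ ∫ s in (0:ℝ)..t, (h s * w s + c * |k s| * χ s) := by
      apply intervalIntegral.integral_mono_on ht.1
      · exact hbndint.const_mul _
      · exact (hhwIT t ht).add (hkχIT t ht)
      · exact hptw
    have hsplit : (∫ s in (0:ℝ)..t, (h s * w s + c * |k s| * χ s))
        = (∫ s in (0:ℝ)..t, h s * w s) + ∫ s in (0:ℝ)..t, c * |k s| * χ s := by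
      exact intervalIntegral.integral_add (hhwIT t ht) (hkχIT t ht)
    have hχK : (∫ s in (0:ℝ)..t, c * |k s| * χ s) ≤ c * G * K := by
      set ind : ℝ → ℝ := (Set.Icc (0:ℝ) τbar).indicator (fun u => |k u|) with hinddef
      have hind : Integrable ind volume :=
        (integrable_indicator_iff measurableSet_Icc).2 hkIccτ.abs
      have hptw2 : ∀ s ∈ Set.Icc (0:ℝ) t, c * |k s| * χ s ≤ (c * G) * ind s := by
        intro s hs
        by_cases hsτ : s < τbar
        · have hmem : s ∈ Set.Icc (0:ℝ) τbar := ⟨hs.1, hsτ.le⟩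
          rw [show χ s = G from if_pos hsτ, hinddef, Set.indicator_of_mem hmem]
          exact le_of_eq (by ring)
        · rw [show χ s = 0 from if_neg hsτ, mul_zero]
          have h0 : 0 ≤ ind s := Set.indicator_nonneg (fun u _ => abs_nonneg _) s
          positivity
      have h7 : (∫ s in (0:ℝ)..t, c * |k s| * χ s) ≤ ∫ s in (0:ℝ)..t, (c * G) * ind s :=
        intervalIntegral.integral_mono_on ht.1 (hkχIT t ht)
          (hind.intervalIntegrable.const_mul _) hptw2
      have h8 : (∫ s in (0:ℝ)..t, (c * G) * ind s) = (c * G) * ∫ s in (0:ℝ)..t, ind s :=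
        intervalIntegral.integral_const_mul _ _
      have h9 : (∫ s in (0:ℝ)..t, ind s) ≤ K := by
        rw [intervalIntegral.integral_of_le ht.1, hinddef,
          setIntegral_indicator measurableSet_Icc]
        have h10 : (∫ s in Set.Ioc 0 t ∩ Set.Icc 0 τbar, |k s|)
            ≤ ∫ s in Set.Icc (0:ℝ) τbar, |k s| :=
          setIntegral_mono_set hkIccτ.abs (ae_of_all _ fun u => abs_nonneg _)
            (HasSubset.Subset.eventuallyLE Set.inter_subset_right)
        have h11 : (∫ s in Set.Icc (0:ℝ) τbar, |k s|) = ∫ s in (0:ℝ)..τbar, |k s| := by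
          rw [intervalIntegral.integral_of_le hτbar.le, integral_Icc_eq_integral_Ioc]
        have h12 := hkK τbar hτbar.le
        rw [sub_self] at h12
        linarith
      have h13 : (c * G) * (∫ s in (0:ℝ)..t, ind s) ≤ (c * G) * K :=
        mul_le_mul_of_nonneg_left h9 (by positivity)
      calc (∫ s in (0:ℝ)..t, c * |k s| * χ s) ≤ (c * G) * ∫ s in (0:ℝ)..t, ind s := by
            rw [← h8]; exact h7
        _ ≤ (c * G) * K := h13
        _ = c * G * K := by ring
    calc v t ≤ M * ‖g 0‖ + ∫ s in (0:ℝ)..t, Real.exp (ω * t) * bnd s := hvt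
      _ ≤ M * ‖g 0‖ + ((∫ s in (0:ℝ)..t, h s * w s) + ∫ s in (0:ℝ)..t, c * |k s| * χ s) := by
          rw [← hsplit]; linarith
      _ ≤ a + ∫ s in (0:ℝ)..t, h s * w s := by
          simp only [hadef]; linarith [hχK]
  -- the comparison function Φ
  have ha0 : 0 ≤ a := by
    have h1 : 0 ≤ M * ‖g 0‖ := by positivity
    have h2 : 0 ≤ c * G * K := by positivity
    simp only [hadef]; linarith
  set Φ : ℝ → ℝ := fun u => a + ∫ s in (0:ℝ)..u, h s * w s with hΦdef
  have hΦcont : ContinuousOn Φ (Set.Icc (0:ℝ) T) := by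
    apply continuousOn_const.add
    have h1 := intervalIntegral.continuousOn_primitive_interval
      (a := (0:ℝ)) (b := T) (μ := volume) (f := fun s => h s * w s)
      (by rwa [Set.uIcc_of_le hT.le])
    rwa [Set.uIcc_of_le hT.le] at h1
  have hΦmono : ∀ x ∈ Set.Icc (0:ℝ) T, ∀ y ∈ Set.Icc (0:ℝ) T, x ≤ y → Φ x ≤ Φ y := by
    intro x hx y hy hxy
    have hxyint : IntervalIntegrable (fun s => h s * w s) volume x y := by
      rw [intervalIntegrable_iff]
      apply hhwIccT.mono_set
      rw [Set.uIoc_of_le hxy]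
      exact fun u hu => ⟨hx.1.trans hu.1.le, hu.2.trans hy.2⟩
    have hadd := intervalIntegral.integral_add_adjacent_intervals (hhwIT x hx) hxyint
    have hnn : 0 ≤ ∫ s in x..y, h s * w s :=
      intervalIntegral.integral_nonneg hxy (fun u _ => mul_nonneg (hh0 u) (hw0 u))
    simp only [hΦdef]
    rw [← hadd]
    linarith
  have hwΦ : ∀ t ∈ Set.Icc (0:ℝ) T, w t ≤ Φ t := by
    intro t ht
    apply csSup_le (himgne t)
    rintro x ⟨r, hr, rfl⟩
    rw [hmeq t ht] at hr
    have hrT : r ∈ Set.Icc (0:ℝ) T := ⟨hr.1, hr.2.trans ht.2⟩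
    calc v r ≤ Φ r := hcore r hrT
      _ ≤ Φ t := hΦmono r hrT t ht hr.2
  have hΦineq : ∀ t ∈ Set.Icc (0:ℝ) T, Φ t ≤ a + ∫ s in (0:ℝ)..t, h s * Φ s := by
    intro t ht
    have hmon : (∫ s in (0:ℝ)..t, h s * w s) ≤ ∫ s in (0:ℝ)..t, h s * Φ s := by
      apply intervalIntegral.integral_mono_on ht.1 (hhwIT t ht)
        ((hhIT t ht).mul_continuousOn
          (by rw [Set.uIcc_of_le ht.1]
              exact hΦcont.mono (Set.Icc_subset_Icc le_rfl ht.2)))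
      intro s hs
      exact mul_le_mul_of_nonneg_left (hwΦ s ⟨hs.1, hs.2.trans ht.2⟩) (hh0 s)
    simp only [hΦdef]
    linarith
  have hgron := gronwall_integral hT.le ha0 hhIccT hh0 hΦcont hΦineq
  -- final computation
  intro t ht
  have hΦt := hgron t ht
  have hvΦ : v t ≤ Φ t := hcore t ht
  have hHt : (∫ s in (0:ℝ)..t, h s) = M * Lc * t + c * ∫ s in (0:ℝ)..t, |k s| := by
    simp only [hhdef]
    rw [intervalIntegral.integral_add intervalIntegrable_const
      ((hkIT t ht).abs.const_mul c), intervalIntegral.integral_const,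
      intervalIntegral.integral_const_mul]
    simp only [smul_eq_mul, sub_zero]
    ring
  have hγt : c * (∫ s in (0:ℝ)..t, |k s|) ≤ γ + ω' * t := by
    have h1 := hγ t ht.1
    have hceq : c = b ^ 2 * M * Real.exp (ω * τbar) := by rw [hcdef]; ring
    rw [hceq]
    exact h1
  have hexple : Real.exp (∫ s in (0:ℝ)..t, h s) ≤ Real.exp (M * Lc * t + (γ + ω' * t)) := by
    apply Real.exp_le_exp.2
    rw [hHt]
    linarith
  have hvt2 : v t ≤ a * Real.exp (M * Lc * t + (γ + ω' * t)) :=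
    le_trans (hvΦ.trans hΦt) (mul_le_mul_of_nonneg_left hexple ha0)
  have hUtf : ‖U t‖ ≤ Real.exp (-(ω * t)) * (a * Real.exp (M * Lc * t + (γ + ω' * t))) := by
    have h1 : ‖U t‖ = Real.exp (-(ω * t)) * v t := by
      simp only [hvdef]
      rw [← mul_assoc, ← Real.exp_add]
      simp
    rw [h1]
    exact mul_le_mul_of_nonneg_left hvt2 (Real.exp_pos _).le
  have hfin : Real.exp (-(ω * t)) * Real.exp (M * Lc * t + (γ + ω' * t))
      = Real.exp γ * Real.exp (-(ω - ω' - M * Lc) * t) := by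
    rw [← Real.exp_add, ← Real.exp_add]
    congr 1
    ring
  have hae : a = M * (‖g 0‖ + Real.exp (ω * τbar) * K * b ^ 2 * G) := by
    rw [hadef, hcdef]; ring
  have htarget : Real.exp (-(ω * t)) * (a * Real.exp (M * Lc * t + (γ + ω' * t)))
      = M * Real.exp γ * (‖g 0‖ + Real.exp (ω * τbar) * K * b ^ 2 * G) *
        Real.exp (-(ω - ω' - M * Lc) * t) := by
    rw [hae]
    linear_combination (M * (‖g 0‖ + Real.exp (ω * τbar) * K * b ^ 2 * G)) * hfin
  rw [← htarget]
  exact hUtf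
end

section
/- Running-maximum Gronwall estimate (core of Lemma 2.2): Let c₀ ≥ 0, let E : [0,∞) → ℝ be differentiable, and let g : [0,∞) → ℝ be nonnegative and locally integrable. If E′(t) ≤ g(t) · max{ c₀, sup_{s ∈ [0,t]} E(s) } for all t ≥ 0, then E(t) ≤ max{c₀, E(0)} · exp( ∫₀ᵗ g(s) ds ) for all t ≥ 0. -/
open MeasureTheory intervalIntegral

set_option maxHeartbeats 1000000

/-- **Running-maximum Gronwall estimate (core of Lemma 2.2).** If `E` is differentiable on
`[0,∞)` with `E′(t) ≤ g(t) · max {c₀, sup_{s∈[0,t]} E(s)}` for a nonnegative locally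
integrable `g`, then `E(t) ≤ max {c₀, E(0)} · exp(∫₀ᵗ g)` for all `t ≥ 0`. -/
theorem running_maximum_gronwall
    (c₀ : ℝ) (hc₀ : 0 ≤ c₀)
    (E E' g : ℝ → ℝ)
    (hE : ∀ t : ℝ, 0 ≤ t → HasDerivAt E (E' t) t)
    (hgnonneg : ∀ t : ℝ, 0 ≤ t → 0 ≤ g t)
    (hgint : LocallyIntegrableOn g (Set.Ici (0 : ℝ)))
    (hineq : ∀ t : ℝ, 0 ≤ t →
      E' t ≤ g t * max c₀ (sSup (E '' Set.Icc (0 : ℝ) t))) :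
    ∀ t : ℝ, 0 ≤ t →
      E t ≤ max c₀ (E 0) * Real.exp (∫ s in (0 : ℝ)..t, g s) := by
  intro T hT
  set M : ℝ → ℝ := fun t => max c₀ (sSup (E '' Set.Icc (0:ℝ) t)) with hMdef
  set M₀ : ℝ := max c₀ (E 0) with hM₀def
  have hM₀ : 0 ≤ M₀ := hc₀.trans (le_max_left _ _)
  -- continuity of `E` on nonnegative intervals
  have hEcont : ∀ a b : ℝ, 0 ≤ a → ContinuousOn E (Set.Icc a b) := fun a b ha x hx =>
    (hE x (ha.trans hx.1)).continuousAt.continuousWithinAt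
  have hbdd : ∀ t : ℝ, BddAbove (E '' Set.Icc (0:ℝ) t) := by
    intro t
    rcases le_or_gt 0 t with h | h
    · exact (isCompact_Icc.image_of_continuousOn (hEcont 0 t le_rfl)).bddAbove
    · simp [Set.Icc_eq_empty_of_lt h]
  have hMmono : Monotone M := by
    intro s t hst
    rcases le_or_gt 0 s with h | h
    · exact max_le_max le_rfl (csSup_le_csSup (hbdd t) ⟨E 0, ⟨0, ⟨le_rfl, h⟩, rfl⟩⟩
        (Set.image_mono (Set.Icc_subset_Icc le_rfl hst)))
    · have hs : M s = c₀ := by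
        simp [hMdef, Set.Icc_eq_empty_of_lt h, Real.sSup_empty, hc₀]
      rw [hs]; exact le_max_left _ _
  have hMnonneg : ∀ t, 0 ≤ M t := fun t => hc₀.trans (le_max_left _ _)
  have hEleM : ∀ s : ℝ, 0 ≤ s → E s ≤ M s := fun s hs =>
    le_trans (le_csSup (hbdd s) ⟨s, ⟨hs, le_rfl⟩, rfl⟩) (le_max_right _ _)
  -- integrability of `g` and `g * M` on `[0, T]`
  have hgT : IntegrableOn g (Set.Icc 0 T) :=
    hgint.integrableOn_compact_subset (fun x hx => hx.1) isCompact_Icc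
  have hgMT : IntegrableOn (fun s => g s * M s) (Set.Icc 0 T) := by
    refine Integrable.mono' (hgT.mul_const (M T))
      (hgT.aestronglyMeasurable.mul
        (hMmono.measurable.aestronglyMeasurable.restrict)) ?_
    filter_upwards [ae_restrict_mem measurableSet_Icc] with x hx
    rw [Real.norm_eq_abs, abs_of_nonneg (mul_nonneg (hgnonneg x hx.1) (hMnonneg x))]
    exact mul_le_mul_of_nonneg_left (hMmono hx.2) (hgnonneg x hx.1)
  have huIcc : ∀ a b : ℝ, a ∈ Set.Icc 0 T → b ∈ Set.Icc 0 T →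
      Set.uIcc a b ⊆ Set.Icc 0 T := by
    intro a b ha hb
    rw [← Set.uIcc_of_le hT]
    exact Set.uIcc_subset_uIcc (by rwa [Set.uIcc_of_le hT]) (by rwa [Set.uIcc_of_le hT])
  have hgi : ∀ a b : ℝ, a ∈ Set.Icc 0 T → b ∈ Set.Icc 0 T →
      IntervalIntegrable g volume a b := fun a b ha hb =>
    (hgT.mono_set (huIcc a b ha hb)).intervalIntegrable
  have hgMi : ∀ a b : ℝ, a ∈ Set.Icc 0 T → b ∈ Set.Icc 0 T →
      IntervalIntegrable (fun s => g s * M s) volume a b := fun a b ha hb =>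
    (hgMT.mono_set (huIcc a b ha hb)).intervalIntegrable
  -- FTC inequality
  have hFTC : ∀ s ∈ Set.Icc (0:ℝ) T, E s - E 0 ≤ ∫ u in (0:ℝ)..s, g u * M u := by
    intro s hs
    refine sub_le_integral_of_hasDeriv_right_of_le hs.1 (hEcont 0 s le_rfl)
      (fun x hx => (hE x hx.1.le).hasDerivWithinAt) ?_ (fun x hx => hineq x hx.1.le)
    exact hgMT.mono_set (Set.Icc_subset_Icc le_rfl hs.2)
  -- monotonicity of the primitive of `g * M`
  have hvmono : ∀ a b : ℝ, a ∈ Set.Icc 0 T → b ∈ Set.Icc 0 T → a ≤ b →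
      (∫ u in (0:ℝ)..a, g u * M u) ≤ ∫ u in (0:ℝ)..b, g u * M u := by
    intro a b ha hb hab
    rw [← sub_nonneg, integral_interval_sub_left (hgMi 0 b (by simp [hT]) hb)
      (hgMi 0 a (by simp [hT]) ha)]
    exact intervalIntegral.integral_nonneg hab
      (fun x hx => mul_nonneg (hgnonneg x (ha.1.trans hx.1)) (hMnonneg x))
  -- integral bound for the running maximum
  have keyM : ∀ s ∈ Set.Icc (0:ℝ) T, M s ≤ M₀ + ∫ u in (0:ℝ)..s, g u * M u := by
    intro s hs
    have hint0 : (0:ℝ) ≤ ∫ u in (0:ℝ)..s, g u * M u := by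
      have := hvmono 0 s (by simp [hT]) hs hs.1
      simpa using this
    refine max_le (by linarith [le_max_left c₀ (E 0)]) ?_
    refine csSup_le ⟨E 0, ⟨0, ⟨le_rfl, hs.1⟩, rfl⟩⟩ ?_
    rintro _ ⟨r, hr, rfl⟩
    have h1 : E r - E 0 ≤ ∫ u in (0:ℝ)..r, g u * M u :=
      hFTC r ⟨hr.1, hr.2.trans hs.2⟩
    have h2 : (∫ u in (0:ℝ)..r, g u * M u) ≤ ∫ u in (0:ℝ)..s, g u * M u :=
      hvmono r s ⟨hr.1, hr.2.trans hs.2⟩ hs hr.2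
    have h3 : E 0 ≤ M₀ := le_max_right _ _
    linarith
  -- ε-perturbed bound
  have main : ∀ ε : ℝ, 0 < ε →
      E T ≤ (M₀ + ε) * Real.exp ((1 + ε) * ∫ s in (0:ℝ)..T, g s) := by
    intro ε hε
    set A : ℝ := M₀ + ε with hAdef
    have hA0 : 0 < A := add_pos_of_nonneg_of_pos hM₀ hε
    set u : ℝ → ℝ := fun t => A + ∫ s in (0:ℝ)..t, g s * M s with hudef
    set Gf : ℝ → ℝ := fun t => ∫ s in (0:ℝ)..t, g s with hGdef
    have hMu : ∀ s ∈ Set.Icc (0:ℝ) T, M s ≤ u s := by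
      intro s hs
      have := keyM s hs
      simp only [hudef]
      linarith
    have humono : ∀ a b : ℝ, a ∈ Set.Icc 0 T → b ∈ Set.Icc 0 T → a ≤ b → u a ≤ u b := by
      intro a b ha hb hab
      simp only [hudef]
      linarith [hvmono a b ha hb hab]
    have hupos : ∀ s ∈ Set.Icc (0:ℝ) T, 0 < u s := by
      intro s hs
      have h0 : (0:ℝ) ≤ ∫ x in (0:ℝ)..s, g x * M x := by
        have := hvmono 0 s (by simp [hT]) hs hs.1
        simpa using this
      simp only [hudef]
      linarith
    have hGmono : ∀ a b : ℝ, a ∈ Set.Icc 0 T → b ∈ Set.Icc 0 T → a ≤ b → Gf a ≤ Gf b := by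
      intro a b ha hb hab
      simp only [hGdef]
      rw [← sub_nonneg, integral_interval_sub_left (hgi 0 b (by simp [hT]) hb)
        (hgi 0 a (by simp [hT]) ha)]
      exact intervalIntegral.integral_nonneg hab (fun x hx => hgnonneg x (ha.1.trans hx.1))
    have hucont : ContinuousOn u (Set.Icc 0 T) := by
      apply continuousOn_const.add
      have := intervalIntegral.continuousOn_primitive_interval
        (f := fun s => g s * M s) (μ := volume) (a := (0:ℝ)) (b := T)
        (by rwa [Set.uIcc_of_le hT])
      rwa [Set.uIcc_of_le hT] at this
    have hGcont : ContinuousOn Gf (Set.Icc 0 T) := by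
      have := intervalIntegral.continuousOn_primitive_interval
        (f := g) (μ := volume) (a := (0:ℝ)) (b := T) (by rwa [Set.uIcc_of_le hT])
      rwa [Set.uIcc_of_le hT] at this
    set S : Set ℝ := {t | u t ≤ A * Real.exp ((1 + ε) * Gf t)} with hSdef
    have hclosed : IsClosed (S ∩ Set.Icc 0 T) := by
      have hcont : ContinuousOn (fun t => A * Real.exp ((1 + ε) * Gf t) - u t)
          (Set.Icc 0 T) :=
        (continuousOn_const.mul ((Real.continuous_exp.comp_continuousOn
          (continuousOn_const.mul hGcont)))).sub hucont
      have hset : S ∩ Set.Icc 0 T = Set.Icc 0 T ∩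
          ((fun t => A * Real.exp ((1 + ε) * Gf t) - u t) ⁻¹' Set.Ici 0) := by
        ext x
        simp [hSdef, sub_nonneg, and_comm]
      rw [hset]
      exact hcont.preimage_isClosed_of_isClosed isClosed_Icc isClosed_Ici
    have h0S : (0:ℝ) ∈ S := by
      simp only [hSdef, Set.mem_setOf_eq, hudef, hGdef, intervalIntegral.integral_same,
        mul_zero, Real.exp_zero, mul_one, add_zero]
      linarith
    have hgt : ∀ x ∈ S ∩ Set.Ico 0 T, ∀ y ∈ Set.Ioi x, (S ∩ Set.Ioc x y).Nonempty := by
      rintro x ⟨hxS, hx0, hxT⟩ y hy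
      set κ : ℝ := min (1/2) (ε / (1 + ε)) with hκdef
      have hκpos : 0 < κ :=
        lt_min (by norm_num) (div_pos hε (by linarith))
      -- find a right neighborhood where Gf increases by at most κ
      have hGx : ContinuousWithinAt Gf (Set.Icc 0 T) x := hGcont x ⟨hx0, hxT.le⟩
      have hev : ∀ᶠ t in nhdsWithin x (Set.Icc 0 T), Gf t < Gf x + κ :=
        hGx.eventually_lt_const (by linarith)
      obtain ⟨V, hVmem, hVsub⟩ := Filter.eventually_iff_exists_mem.1 hev
      obtain ⟨W, hWopen, hWmem, hWsub⟩ := mem_nhdsWithin.1 hVmem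
      obtain ⟨r, hr, hball⟩ := Metric.isOpen_iff.1 hWopen x hWmem
      set z : ℝ := min (min y (x + r/2)) T with hzdef
      have hxz : x < z := lt_min (lt_min hy (by linarith)) hxT
      have hzT : z ≤ T := min_le_right _ _
      have hzy : z ≤ y := (min_le_left _ _).trans (min_le_left _ _)
      have hz0 : (0:ℝ) ≤ z := hx0.trans hxz.le
      have hzIcc : z ∈ Set.Icc (0:ℝ) T := ⟨hz0, hzT⟩
      have hxIcc : x ∈ Set.Icc (0:ℝ) T := ⟨hx0, hxT.le⟩
      have hzW : z ∈ W := by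
        apply hball
        rw [Metric.mem_ball, Real.dist_eq, abs_of_nonneg (by linarith)]
        have : z ≤ x + r/2 := (min_le_left _ _).trans (min_le_right _ _)
        linarith
      have hGz : Gf z < Gf x + κ := hVsub z (hWsub ⟨hzW, hzIcc⟩)
      set Δ : ℝ := Gf z - Gf x with hΔdef
      have hΔ0 : 0 ≤ Δ := by
        have := hGmono x z hxIcc hzIcc hxz.le
        simp only [hΔdef]; linarith
      have hΔκ : Δ ≤ κ := by simp only [hΔdef]; linarith
      have hΔhalf : Δ ≤ 1/2 := hΔκ.trans (min_le_left _ _)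
      have hΔε : (1 + ε) * Δ ≤ ε := by
        have h1 : Δ ≤ ε / (1 + ε) := hΔκ.trans (min_le_right _ _)
        have h2 : (0:ℝ) < 1 + ε := by linarith
        calc (1 + ε) * Δ ≤ (1 + ε) * (ε / (1 + ε)) :=
              mul_le_mul_of_nonneg_left h1 h2.le
          _ = ε := by field_simp
      -- the integral estimate on [x, z]
      have h1 : u z - u x = ∫ s in x..z, g s * M s := by
        simp only [hudef]
        rw [add_sub_add_left_eq_sub]
        exact integral_interval_sub_left (hgMi 0 z (by simp [hT]) hzIcc)
          (hgMi 0 x (by simp [hT]) hxIcc)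
      have h2 : (∫ s in x..z, g s * M s) ≤ ∫ s in x..z, g s * u z := by
        refine intervalIntegral.integral_mono_on hxz.le
          (hgMi x z hxIcc hzIcc) ((hgi x z hxIcc hzIcc).mul_const _) ?_
        intro w hw
        have hwIcc : w ∈ Set.Icc (0:ℝ) T := ⟨hx0.trans hw.1, hw.2.trans hzT⟩
        refine mul_le_mul_of_nonneg_left ?_ (hgnonneg w hwIcc.1)
        exact (hMu w hwIcc).trans (humono w z hwIcc hzIcc hw.2)
      have h3 : (∫ s in x..z, g s * u z) = Δ * u z := by
        rw [intervalIntegral.integral_mul_const]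
        have : (∫ s in x..z, g s) = Δ := by
          simp only [hΔdef, hGdef]
          exact (integral_interval_sub_left (hgi 0 z (by simp [hT]) hzIcc)
            (hgi 0 x (by simp [hT]) hxIcc)).symm
        rw [this, mul_comm]
      have h4 : u z * (1 - Δ) ≤ u x := by nlinarith
      have h5 : (1:ℝ) ≤ (1 + (1 + ε) * Δ) * (1 - Δ) := by nlinarith
      have h6 : u z ≤ u x * (1 + (1 + ε) * Δ) := by
        have huz := (hupos z hzIcc).le
        nlinarith [mul_le_mul_of_nonneg_right h4
          (by nlinarith : (0:ℝ) ≤ 1 + (1 + ε) * Δ)]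
      have h7 : 1 + (1 + ε) * Δ ≤ Real.exp ((1 + ε) * Δ) := by
        have := Real.add_one_le_exp ((1 + ε) * Δ)
        linarith
      have h8 : u z ≤ A * Real.exp ((1 + ε) * Gf x) * Real.exp ((1 + ε) * Δ) := by
        calc u z ≤ u x * (1 + (1 + ε) * Δ) := h6
          _ ≤ (A * Real.exp ((1 + ε) * Gf x)) * Real.exp ((1 + ε) * Δ) :=
              mul_le_mul hxS h7 (by nlinarith) (by positivity)
      have h9 : u z ≤ A * Real.exp ((1 + ε) * Gf z) := by
        rw [mul_assoc, ← Real.exp_add] at h8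
        have harg : (1 + ε) * Gf x + (1 + ε) * Δ = (1 + ε) * Gf z := by
          simp only [hΔdef]; ring
        rwa [harg] at h8
      exact ⟨z, h9, hxz, hzy⟩
    have hTS : T ∈ S :=
      hclosed.Icc_subset_of_forall_exists_gt h0S hgt ⟨hT, le_rfl⟩
    have hTIcc : T ∈ Set.Icc (0:ℝ) T := ⟨hT, le_rfl⟩
    calc E T ≤ M T := hEleM T hT
      _ ≤ u T := hMu T hTIcc
      _ ≤ A * Real.exp ((1 + ε) * Gf T) := hTS
  -- pass to the limit ε → 0⁺
  set G : ℝ := ∫ s in (0:ℝ)..T, g s with hGdef'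
  have hcont : Continuous (fun ε : ℝ => (M₀ + ε) * Real.exp ((1 + ε) * G)) := by
    continuity
  have htend : Filter.Tendsto (fun ε : ℝ => (M₀ + ε) * Real.exp ((1 + ε) * G))
      (nhdsWithin 0 (Set.Ioi 0)) (nhds (M₀ * Real.exp G)) := by
    have h := (hcont.tendsto 0).mono_left
      (nhdsWithin_le_nhds (s := Set.Ioi (0:ℝ)) (a := (0:ℝ)))
    simpa using h
  exact ge_of_tendsto htend
    (Filter.eventually_of_mem self_mem_nhdsWithin (fun ε hε => main ε hε))
end

section
/- Sup-Gronwall integral inequality (core of the proof of Theorem 3.1): Let T > 0, A₀ ≥ 0, let w : [0,T] → ℝ be continuous and nonnegative, and let c : [0,T] → ℝ be nonnegative and integrable. If w(t) ≤ A₀ + ∫₀ᵗ c(s) · ( sup_{r ∈ [0,s]} w(r) ) ds for all t ∈ [0,T], then w(t) ≤ A₀ · exp( ∫₀ᵗ c(s) ds ) for all t ∈ [0,T]. -/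
open MeasureTheory intervalIntegral

theorem gronwall_exp_key (T : ℝ) (c : ℝ → ℝ)
    (hcnonneg : ∀ s ∈ Set.Icc (0 : ℝ) T, 0 ≤ c s)
    (hcint : IntegrableOn c (Set.Icc (0 : ℝ) T))
    {t : ℝ} (ht : t ∈ Set.Icc (0 : ℝ) T) :
    ∫ s in (0 : ℝ)..t, c s * Real.exp (∫ r in (0 : ℝ)..s, c r)
      ≤ Real.exp (∫ s in (0 : ℝ)..t, c s) - 1 := by
  obtain ⟨ht0, htT⟩ := ht
  have hT : (0:ℝ) ≤ T := le_trans ht0 htT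
  set C : ℝ → ℝ := fun x => ∫ r in (0:ℝ)..x, c r with hC
  -- interval integrability of c on subintervals of [0,T]
  have hii : ∀ {a b : ℝ}, 0 ≤ a → a ≤ b → b ≤ T → IntervalIntegrable c volume a b := by
    intro a b ha hab hbT
    apply IntegrableOn.intervalIntegrable
    apply hcint.mono_set
    rw [Set.uIcc_of_le hab]
    exact Set.Icc_subset_Icc ha hbT
  have hCadd : ∀ {a b : ℝ}, 0 ≤ a → a ≤ b → b ≤ T → C b = C a + ∫ s in a..b, c s := by
    intro a b ha hab hbT
    simp only [hC]
    rw [← integral_add_adjacent_intervals (hii le_rfl ha (le_trans hab hbT)) (hii ha hab hbT)]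
  have hCmono : ∀ {a b : ℝ}, 0 ≤ a → a ≤ b → b ≤ T → C a ≤ C b := by
    intro a b ha hab hbT
    rw [hCadd ha hab hbT]
    have : 0 ≤ ∫ s in a..b, c s :=
      integral_nonneg hab (fun u hu => hcnonneg u ⟨le_trans ha hu.1, le_trans hu.2 hbT⟩)
    linarith
  have hC0 : C 0 = 0 := integral_same
  have hCcont : ContinuousOn C (Set.Icc (0:ℝ) T) := by
    have := continuousOn_primitive_interval (a := (0:ℝ)) (b := T) (μ := volume) (f := c) ?_
    · rwa [Set.uIcc_of_le hT] at this
    · rwa [Set.uIcc_of_le hT]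
  -- integrability of the integrand on subintervals
  have hfi : ∀ {a b : ℝ}, 0 ≤ a → a ≤ b → b ≤ T →
      IntervalIntegrable (fun s => c s * Real.exp (C s)) volume a b := by
    intro a b ha hab hbT
    apply IntegrableOn.intervalIntegrable
    rw [Set.uIcc_of_le hab]
    have hsub : Set.Icc a b ⊆ Set.Icc (0:ℝ) T := Set.Icc_subset_Icc ha hbT
    exact IntegrableOn.mul_continuousOn_of_subset (hcint.mono_set hsub)
      ((Real.continuous_exp.comp_continuousOn hCcont)) measurableSet_Icc isCompact_Icc hsub
  -- main estimate with epsilon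
  have main : ∀ ε : ℝ, 0 < ε →
      (∫ s in (0:ℝ)..t, c s * Real.exp (C s)) ≤ Real.exp ε * (Real.exp (C t) - 1) := by
    intro ε hε
    -- uniform continuity of C
    have huc : UniformContinuousOn C (Set.Icc (0:ℝ) T) :=
      isCompact_Icc.uniformContinuousOn_of_continuous hCcont
    rw [Metric.uniformContinuousOn_iff] at huc
    obtain ⟨δ, hδ, hδ'⟩ := huc ε hε
    obtain ⟨n, hn⟩ := exists_nat_gt (t / δ)
    have hn0 : 0 < (n:ℝ) := lt_of_le_of_lt (div_nonneg ht0 hδ.le) hn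
    have hnn : n ≠ 0 := (Nat.cast_pos.mp hn0).ne'
    have hstep : t / n < δ := by
      rw [div_lt_iff₀ hn0]
      have h1 : t = (t/δ) * δ := by field_simp
      nlinarith [mul_lt_mul_of_pos_right hn hδ]
    have hstep0 : 0 ≤ t / n := div_nonneg ht0 hn0.le
    set a : ℕ → ℝ := fun i => i * (t / n) with ha
    have hA : ∀ i : ℕ, i ≤ n → a i ∈ Set.Icc (0:ℝ) t := by
      intro i hi
      constructor
      · positivity
      · rw [ha]
        simp only
        calc (i:ℝ) * (t/n) ≤ n * (t/n) := by
              apply mul_le_mul_of_nonneg_right (by exact_mod_cast hi) hstep0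
        _ = t := by field_simp
    have han : a n = t := by rw [ha]; field_simp
    have ha0 : a 0 = 0 := by simp [ha]
    -- per-piece bound
    have piece : ∀ k : ℕ, k < n →
        (∫ s in a k..a (k+1), c s * Real.exp (C s))
          ≤ Real.exp ε * (Real.exp (C (a (k+1))) - Real.exp (C (a k))) := by
      intro k hk
      have hk1 : k + 1 ≤ n := hk
      have hpmem := hA k hk.le
      have hqmem := hA (k+1) hk1
      have hp0 : 0 ≤ a k := hpmem.1
      have hpq : a k ≤ a (k+1) := by
        rw [ha]; simp only
        apply mul_le_mul_of_nonneg_right (by exact_mod_cast Nat.le_succ k) hstep0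
      have hqT : a (k+1) ≤ T := le_trans hqmem.2 htT
      have hΔ : C (a (k+1)) - C (a k) ≤ ε := by
        have hd : dist (a (k+1)) (a k) < δ := by
          rw [Real.dist_eq, abs_of_nonneg (by linarith)]
          have : a (k+1) - a k = t / n := by rw [ha]; push_cast; ring
          rw [this]; exact hstep
        have := hδ' (a (k+1)) ⟨hqmem.1, hqT⟩ (a k) ⟨hp0, le_trans hpmem.2 htT⟩ hd
        rw [Real.dist_eq] at this
        exact le_of_lt (lt_of_le_of_lt (le_abs_self _) this)
      have hΔ0 : 0 ≤ C (a (k+1)) - C (a k) := by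
        have := hCmono hp0 hpq hqT; linarith
      have step1 : (∫ s in a k..a (k+1), c s * Real.exp (C s))
          ≤ Real.exp (C (a (k+1))) * (C (a (k+1)) - C (a k)) := by
        have hmono : ∀ x ∈ Set.Icc (a k) (a (k+1)),
            c x * Real.exp (C x) ≤ c x * Real.exp (C (a (k+1))) := by
          intro x hx
          apply mul_le_mul_of_nonneg_left _ (hcnonneg x ⟨le_trans hp0 hx.1, le_trans hx.2 hqT⟩)
          exact Real.exp_le_exp.2 (hCmono (le_trans hp0 hx.1) hx.2 hqT)
        calc (∫ s in a k..a (k+1), c s * Real.exp (C s))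
            ≤ ∫ s in a k..a (k+1), c s * Real.exp (C (a (k+1))) := by
              apply integral_mono_on hpq (hfi hp0 hpq hqT) _ hmono
              exact (hii hp0 hpq hqT).mul_const _
        _ = (∫ s in a k..a (k+1), c s) * Real.exp (C (a (k+1))) := integral_mul_const _ _
        _ = Real.exp (C (a (k+1))) * (C (a (k+1)) - C (a k)) := by
              have := hCadd hp0 hpq hqT
              rw [mul_comm]
              congr 1
              linarith
      refine le_trans step1 ?_
      -- exp (Cq) * Δ ≤ exp ε * (exp Cq - exp Cp), with Cq = Cp + Δ, 0 ≤ Δ ≤ ε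
      set Δ := C (a (k+1)) - C (a k) with hΔdef
      have hq_eq : Real.exp (C (a (k+1))) = Real.exp (C (a k)) * Real.exp Δ := by
        rw [← Real.exp_add]; congr 1; rw [hΔdef]; ring
      have h1 : Δ + 1 ≤ Real.exp Δ := Real.add_one_le_exp Δ
      have h2 : Real.exp Δ ≤ Real.exp ε := Real.exp_le_exp.2 hΔ
      have h3 : (0:ℝ) < Real.exp (C (a k)) := Real.exp_pos _
      rw [hq_eq]
      have e1 : Real.exp Δ * Δ ≤ Real.exp ε * Δ := mul_le_mul_of_nonneg_right h2 hΔ0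
      have e2 : Real.exp ε * Δ ≤ Real.exp ε * (Real.exp Δ - 1) :=
        mul_le_mul_of_nonneg_left (by linarith) (Real.exp_pos ε).le
      have e3 : Real.exp Δ * Δ ≤ Real.exp ε * (Real.exp Δ - 1) := e1.trans e2
      nlinarith [mul_le_mul_of_nonneg_left e3 h3.le]
    -- sum up
    have hsum : (∫ s in (0:ℝ)..t, c s * Real.exp (C s))
        = ∑ k ∈ Finset.range n, ∫ s in a k..a (k+1), c s * Real.exp (C s) := by
      rw [sum_integral_adjacent_intervals (fun k hk => ?_), ha0, han]
      have hk1 : k + 1 ≤ n := hk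
      exact hfi (hA k hk.le).1 (by
        rw [ha]; simp only
        apply mul_le_mul_of_nonneg_right (by exact_mod_cast Nat.le_succ k) hstep0)
        (le_trans (hA (k+1) hk1).2 htT)
    rw [hsum]
    calc (∑ k ∈ Finset.range n, ∫ s in a k..a (k+1), c s * Real.exp (C s))
        ≤ ∑ k ∈ Finset.range n,
            Real.exp ε * (Real.exp (C (a (k+1))) - Real.exp (C (a k))) :=
          Finset.sum_le_sum (fun k hk => piece k (Finset.mem_range.1 hk))
    _ = Real.exp ε * ∑ k ∈ Finset.range n,
            (Real.exp (C (a (k+1))) - Real.exp (C (a k))) := by rw [Finset.mul_sum]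
    _ = Real.exp ε * (Real.exp (C t) - 1) := by
          rw [Finset.sum_range_sub (fun k => Real.exp (C (a k))), ha0, han, hC0, Real.exp_zero]
  -- pass to the limit ε → 0
  have hR0 : (0:ℝ) ≤ Real.exp (C t) - 1 := by
    have : (0:ℝ) ≤ C t := by have := hCmono le_rfl ht0 htT; rwa [hC0] at this
    have := Real.one_le_exp this
    linarith
  apply le_of_forall_pos_le_add
  intro ε' hε'
  set R := Real.exp (C t) - 1 with hRdef
  set ε := Real.log (1 + ε' / (R + 1)) with hεdef
  have hfrac : 0 < ε' / (R + 1) := div_pos hε' (by linarith)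
  have hεpos : 0 < ε := Real.log_pos (by linarith)
  have hexpε : Real.exp ε = 1 + ε' / (R + 1) := Real.exp_log (by linarith)
  have := main ε hεpos
  rw [hexpε] at this
  have hd : ε' / (R + 1) * R ≤ ε' := by
    rw [div_mul_eq_mul_div, div_le_iff₀ (by linarith : (0:ℝ) < R + 1)]
    nlinarith
  calc (∫ s in (0:ℝ)..t, c s * Real.exp (C s)) ≤ (1 + ε' / (R + 1)) * R := this
  _ = R + ε' / (R + 1) * R := by ring
  _ ≤ R + ε' := by linarith

/-- **Sup-Gronwall integral inequality (core of the proof of Theorem 3.1).** If a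
continuous nonnegative `w` on `[0,T]` satisfies
`w(t) ≤ A₀ + ∫₀ᵗ c(s) · sup_{r∈[0,s]} w(r) ds` with `c` nonnegative and integrable, then
`w(t) ≤ A₀ · exp(∫₀ᵗ c)` on `[0,T]`. -/
theorem sup_gronwall_integral
    (T : ℝ) (hT : 0 < T)
    (A₀ : ℝ) (hA₀ : 0 ≤ A₀)
    (w c : ℝ → ℝ)
    (hwcont : ContinuousOn w (Set.Icc (0 : ℝ) T))
    (hwnonneg : ∀ t ∈ Set.Icc (0 : ℝ) T, 0 ≤ w t)
    (hcnonneg : ∀ s ∈ Set.Icc (0 : ℝ) T, 0 ≤ c s)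
    (hcint : IntegrableOn c (Set.Icc (0 : ℝ) T))
    (hineq : ∀ t ∈ Set.Icc (0 : ℝ) T,
      w t ≤ A₀ + ∫ s in (0 : ℝ)..t, c s * sSup (w '' Set.Icc (0 : ℝ) s)) :
    ∀ t ∈ Set.Icc (0 : ℝ) T,
      w t ≤ A₀ * Real.exp (∫ s in (0 : ℝ)..t, c s) := by
  have hT0 : (0:ℝ) ≤ T := hT.le
  set C : ℝ → ℝ := fun x => ∫ r in (0:ℝ)..x, c r with hCdef
  set E : ℝ → ℝ := fun x => Real.exp (C x) with hEdef
  set W : ℝ → ℝ := fun s => sSup (w '' Set.Icc (0:ℝ) s) with hWdef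
  -- basic facts about C
  have hii : ∀ {a b : ℝ}, 0 ≤ a → a ≤ b → b ≤ T → IntervalIntegrable c volume a b := by
    intro a b ha hab hbT
    apply IntegrableOn.intervalIntegrable
    apply hcint.mono_set
    rw [Set.uIcc_of_le hab]
    exact Set.Icc_subset_Icc ha hbT
  have hCadd : ∀ {a b : ℝ}, 0 ≤ a → a ≤ b → b ≤ T → C b = C a + ∫ s in a..b, c s := by
    intro a b ha hab hbT
    simp only [hCdef]
    rw [← integral_add_adjacent_intervals (hii le_rfl ha (le_trans hab hbT)) (hii ha hab hbT)]
  have hCmono : ∀ {a b : ℝ}, 0 ≤ a → a ≤ b → b ≤ T → C a ≤ C b := by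
    intro a b ha hab hbT
    rw [hCadd ha hab hbT]
    have : 0 ≤ ∫ s in a..b, c s :=
      integral_nonneg hab (fun u hu => hcnonneg u ⟨le_trans ha hu.1, le_trans hu.2 hbT⟩)
    linarith
  have hC0 : C 0 = 0 := integral_same
  have hE0 : E 0 = 1 := by rw [hEdef]; simp [hC0]
  have hCcont : ContinuousOn C (Set.Icc (0:ℝ) T) := by
    have := continuousOn_primitive_interval (a := (0:ℝ)) (b := T) (μ := volume) (f := c) ?_
    · rwa [Set.uIcc_of_le hT0] at this
    · rwa [Set.uIcc_of_le hT0]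
  have hEcont : ContinuousOn E (Set.Icc (0:ℝ) T) :=
    Real.continuous_exp.comp_continuousOn hCcont
  have hEmono : ∀ {a b : ℝ}, 0 ≤ a → a ≤ b → b ≤ T → E a ≤ E b := by
    intro a b ha hab hbT
    exact Real.exp_le_exp.2 (hCmono ha hab hbT)
  have hEpos : ∀ x, 0 < E x := fun x => Real.exp_pos _
  -- basic facts about W
  have hne : ∀ {s : ℝ}, 0 ≤ s → (w '' Set.Icc (0:ℝ) s).Nonempty :=
    fun {s} hs => (Set.nonempty_Icc.2 hs).image w
  have hbdd : ∀ {s : ℝ}, s ∈ Set.Icc (0:ℝ) T → BddAbove (w '' Set.Icc (0:ℝ) s) := by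
    intro s hs
    exact (isCompact_Icc.image_of_continuousOn
      (hwcont.mono (Set.Icc_subset_Icc le_rfl hs.2))).bddAbove
  have hle_sup : ∀ {s : ℝ}, s ∈ Set.Icc (0:ℝ) T → ∀ r ∈ Set.Icc (0:ℝ) s, w r ≤ W s := by
    intro s hs r hr
    exact le_csSup (hbdd hs) (Set.mem_image_of_mem w hr)
  have hsup_le : ∀ {s B : ℝ}, 0 ≤ s → (∀ r ∈ Set.Icc (0:ℝ) s, w r ≤ B) → W s ≤ B := by
    intro s B hs h
    apply csSup_le (hne hs)
    rintro x ⟨r, hr, rfl⟩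
    exact h r hr
  have hWnonneg : ∀ {s : ℝ}, s ∈ Set.Icc (0:ℝ) T → 0 ≤ W s := by
    intro s hs
    exact le_trans (hwnonneg 0 ⟨le_rfl, hT0⟩) (hle_sup hs 0 ⟨le_rfl, hs.1⟩)
  set M : ℝ := W T with hMdef
  have hWM : ∀ {s : ℝ}, s ∈ Set.Icc (0:ℝ) T → W s ≤ M := by
    intro s hs
    apply hsup_le hs.1
    intro r hr
    exact hle_sup (s := T) ⟨hT0, le_rfl⟩ r ⟨hr.1, le_trans hr.2 hs.2⟩
  have hWmono : MonotoneOn W (Set.Icc (0:ℝ) T) := by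
    intro x hx y hy hxy
    apply hsup_le hx.1
    intro r hr
    exact hle_sup hy r ⟨hr.1, le_trans hr.2 hxy⟩
  -- integrability of c * W on [0, τ]
  have hcWint : ∀ {τ : ℝ}, τ ∈ Set.Icc (0:ℝ) T →
      IntervalIntegrable (fun s => c s * W s) volume 0 τ := by
    intro τ hτ
    apply IntegrableOn.intervalIntegrable
    rw [Set.uIcc_of_le hτ.1]
    have hsub : Set.Icc (0:ℝ) τ ⊆ Set.Icc (0:ℝ) T := Set.Icc_subset_Icc le_rfl hτ.2
    have hWae : AEMeasurable W (volume.restrict (Set.Icc (0:ℝ) τ)) :=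
      aemeasurable_restrict_of_monotoneOn measurableSet_Icc (hWmono.mono hsub)
    have hcae := (hcint.mono_set hsub).aestronglyMeasurable
    refine Integrable.mono' ((hcint.mono_set hsub).mul_const M)
      (hcae.mul hWae.aestronglyMeasurable) ?_
    filter_upwards [ae_restrict_mem measurableSet_Icc] with s hs
    have hsT : s ∈ Set.Icc (0:ℝ) T := hsub hs
    rw [Real.norm_eq_abs, abs_of_nonneg (mul_nonneg (hcnonneg s hsT) (hWnonneg hsT))]
    exact mul_le_mul_of_nonneg_left (hWM hsT) (hcnonneg s hsT)
  -- integrability of c * (B * E) on [0, τ]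
  have hcEint : ∀ {τ B : ℝ}, τ ∈ Set.Icc (0:ℝ) T →
      IntervalIntegrable (fun s => c s * (B * E s)) volume 0 τ := by
    intro τ B hτ
    apply IntegrableOn.intervalIntegrable
    rw [Set.uIcc_of_le hτ.1]
    have hsub : Set.Icc (0:ℝ) τ ⊆ Set.Icc (0:ℝ) T := Set.Icc_subset_Icc le_rfl hτ.2
    exact IntegrableOn.mul_continuousOn_of_subset (hcint.mono_set hsub)
      (continuousOn_const.mul hEcont) measurableSet_Icc isCompact_Icc hsub
  -- the key step
  have key : ∀ {τ : ℝ}, τ ∈ Set.Icc (0:ℝ) T →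
      (∫ s in (0:ℝ)..τ, c s * E s) ≤ E τ - 1 := by
    intro τ hτ
    exact gronwall_exp_key T c hcnonneg hcint hτ
  -- main step for a fixed ε
  have main_step : ∀ ε > (0:ℝ), ∀ τ ∈ Set.Icc (0:ℝ) T,
      (∀ s, 0 ≤ s → s < τ → w s ≤ (A₀ + ε) * E s) → w τ ≤ (A₀ + ε) * E τ - ε := by
    intro ε hε τ hτ hpre
    set B := A₀ + ε with hBdef
    have hB : 0 < B := by linarith
    -- a.e. bound on [0, τ]
    have hWB : ∀ s, 0 ≤ s → s < τ → c s * W s ≤ c s * (B * E s) := by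
      intro s hs0 hsτ
      have hsT : s ∈ Set.Icc (0:ℝ) T := ⟨hs0, le_trans hsτ.le hτ.2⟩
      apply mul_le_mul_of_nonneg_left _ (hcnonneg s hsT)
      apply hsup_le hs0
      intro r hr
      have hrT : r ∈ Set.Icc (0:ℝ) T := ⟨hr.1, le_trans hr.2 hsT.2⟩
      calc w r ≤ B * E r := hpre r hr.1 (lt_of_le_of_lt hr.2 hsτ)
      _ ≤ B * E s := mul_le_mul_of_nonneg_left (hEmono hr.1 hr.2 hsT.2) hB.le
    have haebound : (fun s => c s * W s)
        ≤ᵐ[volume.restrict (Set.Icc (0:ℝ) τ)] (fun s => c s * (B * E s)) := by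
      have hns : ∀ᵐ s : ℝ ∂volume, s ≠ τ := by
        rw [ae_iff]
        simp only [ne_eq, not_not, Set.setOf_eq_eq_singleton]
        exact measure_singleton τ
      filter_upwards [ae_restrict_of_ae hns, ae_restrict_mem measurableSet_Icc] with s hsne hsmem
      exact hWB s hsmem.1 (lt_of_le_of_ne hsmem.2 hsne)
    calc w τ ≤ A₀ + ∫ s in (0:ℝ)..τ, c s * W s := hineq τ hτ
    _ ≤ A₀ + ∫ s in (0:ℝ)..τ, c s * (B * E s) := by
        have := integral_mono_ae_restrict hτ.1 (hcWint hτ) (hcEint hτ) haebound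
        linarith
    _ = A₀ + B * ∫ s in (0:ℝ)..τ, c s * E s := by
        rw [← intervalIntegral.integral_const_mul]
        congr 1
        apply integral_congr
        intro s _
        ring
    _ ≤ A₀ + B * (E τ - 1) := by
        have := key hτ
        nlinarith
    _ = B * E τ - ε := by rw [hBdef]; ring
  -- crossing argument: for every ε > 0, w ≤ (A₀+ε) E on [0,T]
  have eps_bound : ∀ ε > (0:ℝ), ∀ t ∈ Set.Icc (0:ℝ) T, w t ≤ (A₀ + ε) * E t := by
    intro ε hε
    set B := A₀ + ε with hBdef
    set S : Set ℝ := {t | t ∈ Set.Icc (0:ℝ) T ∧ ∀ s ∈ Set.Icc (0:ℝ) t, w s ≤ B * E s} with hSdef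
    have hS0 : (0:ℝ) ∈ S := by
      constructor
      · exact ⟨le_rfl, hT0⟩
      · intro s hs
        have hs0 : s = 0 := le_antisymm hs.2 hs.1
        subst hs0
        have h00 := main_step ε hε 0 ⟨le_rfl, hT0⟩ (fun s hs0 hs1 => absurd (lt_of_le_of_lt hs0 hs1) (lt_irrefl 0))
        rw [hE0] at h00 ⊢
        rw [hBdef]
        linarith
    have hSne : S.Nonempty := ⟨0, hS0⟩
    have hSbdd : BddAbove S := ⟨T, fun x hx => hx.1.2⟩
    set τ := sSup S with hτdef
    have hτ0 : 0 ≤ τ := le_csSup hSbdd hS0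
    have hτT : τ ≤ T := csSup_le hSne (fun x hx => hx.1.2)
    have hτmem : τ ∈ Set.Icc (0:ℝ) T := ⟨hτ0, hτT⟩
    have hpre : ∀ s, 0 ≤ s → s < τ → w s ≤ B * E s := by
      intro s hs0 hsτ
      obtain ⟨x, hxS, hsx⟩ := exists_lt_of_lt_csSup hSne hsτ
      exact hxS.2 s ⟨hs0, hsx.le⟩
    have hwτ : w τ ≤ B * E τ - ε := main_step ε hε τ hτmem hpre
    have hτS : τ ∈ S := by
      refine ⟨hτmem, ?_⟩
      intro s hs
      rcases lt_or_eq_of_le hs.2 with h | h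
      · exact hpre s hs.1 h
      · subst h; linarith
    -- τ must equal T
    have hτeq : τ = T := by
      by_contra hne'
      have hτltT : τ < T := lt_of_le_of_ne hτT hne'
      -- continuity of B*E - w at τ within [0,T]
      have hg : ContinuousWithinAt (fun s => B * E s - w s) (Set.Icc (0:ℝ) T) τ :=
        ((continuousOn_const.mul hEcont).sub hwcont).continuousWithinAt hτmem
      have hgτ : (0:ℝ) < B * E τ - w τ := by linarith
      have hev : ∀ᶠ s in nhdsWithin τ (Set.Icc (0:ℝ) T), 0 < B * E s - w s :=
        hg.eventually (eventually_gt_nhds hgτ)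
      rw [Filter.eventually_iff, Metric.mem_nhdsWithin_iff] at hev
      obtain ⟨δ, hδ, hδ'⟩ := hev
      set t' := min T (τ + δ/2) with ht'def
      have hτt' : τ < t' := lt_min hτltT (by linarith)
      have ht'T : t' ≤ T := min_le_left _ _
      have ht'S : t' ∈ S := by
        refine ⟨⟨le_trans hτ0 hτt'.le, ht'T⟩, ?_⟩
        intro s hs
        rcases le_or_gt s τ with h | h
        · exact hτS.2 s ⟨hs.1, h⟩
        · have hsmem : s ∈ Set.Icc (0:ℝ) T := ⟨hs.1, le_trans hs.2 ht'T⟩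
          have hd : dist s τ < δ := by
            rw [Real.dist_eq, abs_of_nonneg (by linarith)]
            have : s ≤ τ + δ/2 := le_trans hs.2 (min_le_right _ _)
            linarith
          have := hδ' ⟨Metric.mem_ball.2 hd, hsmem⟩
          simp only [Set.mem_setOf_eq] at this
          linarith
      have : t' ≤ τ := le_csSup hSbdd ht'S
      linarith
    intro t ht
    exact hτS.2 t (by rw [hτeq]; exact ht)
  -- conclude by letting ε → 0
  intro t ht
  have hEt : (0:ℝ) < E t := hEpos t
  apply le_of_forall_pos_le_add
  intro ε' hε'
  have hfrac : 0 < ε' / E t := div_pos hε' hEt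
  have := eps_bound (ε' / E t) hfrac t ht
  have hmul : ε' / E t * E t = ε' := div_mul_cancel₀ ε' hEt.ne'
  nlinarith
end

section
/- Delayed weighted integral estimate (estimate (2.17) in the proof of Theorem 3.1, scalar form): Let τ̄ > 0, T > 0, ω > 0, K > 0. Let u : [−τ̄, T] → [0,∞) be continuous, let τ : [0,T] → ℝ be continuous with 0 ≤ τ(s) ≤ τ̄, and let k : [−τ̄, T] → ℝ be locally integrable with ∫_{t−τ̄}^{t} |k(s)| ds < K whenever [t−τ̄, t] ⊆ [−τ̄, T]. Then for every t ∈ [0, T]: ∫₀ᵗ e^{ω(s−τ(s))} |k(s)| u(s−τ(s)) ds ≤ K · max_{r ∈ [−τ̄, 0]} e^{ωr} u(r) + ∫₀ᵗ |k(s)| · ( max_{r ∈ [max(s−τ̄,0), s]} e^{ωr} u(r) ) ds. -/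
open MeasureTheory intervalIntegral Set

/-- continuity of the running windowed supremum -/
lemma windowSup_continuousOn (φ : ℝ → ℝ) (τbar b : ℝ) (hτbar : 0 < τbar) (hb : 0 ≤ b)
    (hφ : ContinuousOn φ (Set.Icc 0 b)) :
    ContinuousOn (fun s => sSup (φ '' Set.Icc (max (s - τbar) 0) s)) (Set.Icc 0 b) := by
  set a : ℝ → ℝ := fun r => max (r - τbar) 0 with ha
  have haLip : ∀ p q : ℝ, |a p - a q| ≤ |p - q| := by
    intro p q
    have := abs_max_sub_max_le_abs (p - τbar) (q - τbar) 0
    simpa [ha] using this.trans (by rw [show p - τbar - (q - τbar) = p - q by ring])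
  set Ψ : ℝ → ℝ := fun s => sSup (φ '' Set.Icc (a s) s) with hΨ
  have hwin : ∀ s ∈ Icc (0:ℝ) b, Icc (a s) s ⊆ Icc (0:ℝ) b := by
    intro s hs x hx
    exact ⟨le_trans (le_max_right _ _) hx.1, hx.2.trans hs.2⟩
  have hUC := (isCompact_Icc : IsCompact (Icc (0:ℝ) b)).uniformContinuousOn_of_continuous hφ
  rw [Metric.uniformContinuousOn_iff] at hUC
  rw [Metric.continuousOn_iff]
  intro x hx ε hε
  obtain ⟨δ, hδ, hδ'⟩ := hUC (ε/2) (by linarith)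
  refine ⟨δ, hδ, fun y hy hxy => ?_⟩
  -- key one-sided estimate
  have key : ∀ p ∈ Icc (0:ℝ) b, ∀ q ∈ Icc (0:ℝ) b, dist p q < δ → Ψ p ≤ Ψ q + ε/2 := by
    intro p hp q hq hpq
    have hap : a p ≤ p := max_le (by linarith) hp.1
    have haq : a q ≤ q := max_le (by linarith) hq.1
    have hne : (Icc (a p) p).Nonempty := ⟨p, ⟨hap, le_rfl⟩⟩
    obtain ⟨x0, hx0, hmax⟩ := isCompact_Icc.exists_isMaxOn hne (hφ.mono (hwin p hp))
    have hΨp : Ψ p ≤ φ x0 := by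
      apply csSup_le (hne.image φ)
      rintro _ ⟨z, hz, rfl⟩
      exact hmax hz
    -- clamp x0 into the window of q
    set x1 : ℝ := max (a q) (min x0 q) with hx1
    have hx1mem : x1 ∈ Icc (a q) q := ⟨le_max_left _ _, max_le haq ((min_le_right _ _))⟩
    have hdist : |x0 - x1| ≤ |p - q| := by
      rcases le_total x0 q with h | h
      · rw [min_eq_left h] at hx1
        rcases le_total (a q) x0 with h2 | h2
        · rw [hx1, max_eq_right h2]; simp [abs_nonneg]
        · rw [hx1, max_eq_left h2]
          have h3 : a p ≤ x0 := hx0.1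
          have := haLip q p
          rw [abs_sub_le_iff] at this
          rw [abs_sub_comm, abs_of_nonneg (by linarith)]
          calc a q - x0 ≤ a q - a p := by linarith
            _ ≤ |p - q| := by rw [abs_sub_comm]; linarith [this.1]
      · rw [min_eq_right h, max_eq_right haq] at hx1
        rw [hx1, abs_of_nonneg (by linarith)]
        have : x0 ≤ p := hx0.2
        calc x0 - q ≤ p - q := by linarith
          _ ≤ |p - q| := le_abs_self _
    have hx0S : x0 ∈ Icc (0:ℝ) b := hwin p hp hx0
    have hx1S : x1 ∈ Icc (0:ℝ) b := hwin q hq hx1mem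
    have hclose : dist (φ x0) (φ x1) < ε/2 := by
      apply hδ' x0 hx0S x1 hx1S
      rw [Real.dist_eq]
      rw [Real.dist_eq] at hpq
      exact lt_of_le_of_lt hdist hpq
    have hφle : φ x0 ≤ φ x1 + ε/2 := by
      rw [Real.dist_eq, abs_sub_lt_iff] at hclose
      linarith [hclose.1]
    have hbdd : BddAbove (φ '' Icc (a q) q) :=
      (isCompact_Icc.image_of_continuousOn (hφ.mono (hwin q hq))).bddAbove
    have hΨq : φ x1 ≤ Ψ q := le_csSup hbdd ⟨x1, hx1mem, rfl⟩
    linarith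
  have h1 := key y hy x hx hxy
  have h2 := key x hx y hy (by rwa [dist_comm])
  rw [Real.dist_eq, abs_sub_lt_iff]
  constructor <;> linarith

/-- **Delayed weighted integral estimate (estimate (2.17) in the proof of Theorem 3.1,
scalar form).** For a continuous nonnegative `u` on `[−τ̄, T]`, a continuous delay
`0 ≤ τ(s) ≤ τ̄`, and a locally integrable `k` whose absolute value integrates to less than
`K` on every subinterval of length `τ̄` contained in `[−τ̄, T]`, the weighted delayed
integral is bounded by the history term plus a running-maximum term. -/
theorem delayed_weighted_integral_estimate
    (τbar T ω K : ℝ) (hτbar : 0 < τbar) (hT : 0 < T) (hω : 0 < ω) (hK : 0 < K)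
    (u : ℝ → ℝ) (τ : ℝ → ℝ) (k : ℝ → ℝ)
    (hucont : ContinuousOn u (Set.Icc (-τbar) T))
    (hunonneg : ∀ r ∈ Set.Icc (-τbar) T, 0 ≤ u r)
    (hτcont : ContinuousOn τ (Set.Icc (0 : ℝ) T))
    (hτ : ∀ s ∈ Set.Icc (0 : ℝ) T, 0 ≤ τ s ∧ τ s ≤ τbar)
    (hkint : IntegrableOn k (Set.Icc (-τbar) T))
    (hkK : ∀ t : ℝ, 0 ≤ t → t ≤ T → ∫ s in (t - τbar)..t, |k s| < K) :
    ∀ t ∈ Set.Icc (0 : ℝ) T,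
      (∫ s in (0 : ℝ)..t, Real.exp (ω * (s - τ s)) * |k s| * u (s - τ s)) ≤
        K * sSup ((fun r => Real.exp (ω * r) * u r) '' Set.Icc (-τbar) (0 : ℝ)) +
        ∫ s in (0 : ℝ)..t,
          |k s| * sSup ((fun r => Real.exp (ω * r) * u r) '' Set.Icc (max (s - τbar) 0) s) := by
  set φ : ℝ → ℝ := fun r => Real.exp (ω * r) * u r with hφdef
  have hτbarT : -τbar ≤ 0 := by linarith
  have hφcont : ContinuousOn φ (Icc (-τbar) T) :=
    ((Real.continuous_exp.comp (continuous_const.mul continuous_id)).continuousOn).mul hucont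
  have hφnonneg : ∀ r ∈ Icc (-τbar) T, 0 ≤ φ r := fun r hr =>
    mul_nonneg (Real.exp_pos _).le (hunonneg r hr)
  set M0 : ℝ := sSup (φ '' Icc (-τbar) 0) with hM0def
  have hsub0 : Icc (-τbar) (0:ℝ) ⊆ Icc (-τbar) T := Icc_subset_Icc le_rfl hT.le
  have hbdd0 : BddAbove (φ '' Icc (-τbar) 0) :=
    (isCompact_Icc.image_of_continuousOn (hφcont.mono hsub0)).bddAbove
  have hM0_ub : ∀ x ∈ Icc (-τbar) (0:ℝ), φ x ≤ M0 := fun x hx => le_csSup hbdd0 ⟨x, hx, rfl⟩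
  have hM0_nonneg : 0 ≤ M0 :=
    le_trans (hφnonneg 0 ⟨hτbarT, hT.le⟩) (hM0_ub 0 ⟨hτbarT, le_rfl⟩)
  set M : ℝ → ℝ := fun s => sSup (φ '' Icc (max (s - τbar) 0) s) with hMdef
  have hwinsub : ∀ s ∈ Icc (0:ℝ) T, Icc (max (s - τbar) 0) s ⊆ Icc (-τbar) T :=
    fun s hs x hx => ⟨le_trans hτbarT (le_trans (le_max_right _ _) hx.1), hx.2.trans hs.2⟩
  have hM_ub : ∀ s ∈ Icc (0:ℝ) T, ∀ x ∈ Icc (max (s - τbar) 0) s, φ x ≤ M s := by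
    intro s hs x hx
    have hbdd : BddAbove (φ '' Icc (max (s - τbar) 0) s) :=
      (isCompact_Icc.image_of_continuousOn (hφcont.mono (hwinsub s hs))).bddAbove
    exact le_csSup hbdd ⟨x, hx, rfl⟩
  have hM_nonneg : ∀ s ∈ Icc (0:ℝ) T, 0 ≤ M s := by
    intro s hs
    have hsmem : s ∈ Icc (max (s - τbar) 0) s := ⟨max_le (by linarith) hs.1, le_rfl⟩
    exact le_trans (hφnonneg s ⟨le_trans hτbarT hs.1, hs.2⟩) (hM_ub s hs s hsmem)
  have hMcont : ContinuousOn M (Icc (0:ℝ) T) :=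
    windowSup_continuousOn φ τbar T hτbar hT.le (hφcont.mono (Icc_subset_Icc hτbarT le_rfl))
  -- integrability of |k|
  have habs : IntegrableOn (fun s => |k s|) (Icc (-τbar) T) := hkint.abs
  have hkII : ∀ c d : ℝ, -τbar ≤ c → c ≤ d → d ≤ T →
      IntervalIntegrable (fun s => |k s|) volume c d := by
    intro c d h1 h2 h3
    apply IntegrableOn.intervalIntegrable
    rw [uIcc_of_le h2]
    exact habs.mono_set (Icc_subset_Icc h1 h3)
  -- the delayed argument
  have hrmem : ∀ s ∈ Icc (0:ℝ) T, s - τ s ∈ Icc (-τbar) T := by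
    intro s hs
    obtain ⟨h1, h2⟩ := hτ s hs
    exact ⟨by linarith [hs.1], by linarith [hs.2]⟩
  have hgcont : ContinuousOn (fun s => φ (s - τ s)) (Icc (0:ℝ) T) :=
    hφcont.comp (continuousOn_id.sub hτcont) hrmem
  intro t ht
  have h0t : (0:ℝ) ≤ t := ht.1
  have htT : t ≤ T := ht.2
  have hsubt : Icc (0:ℝ) t ⊆ Icc (0:ℝ) T := Icc_subset_Icc le_rfl htT
  -- integrability of the LHS integrand
  have hfint : IntegrableOn (fun s => Real.exp (ω * (s - τ s)) * |k s| * u (s - τ s))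
      (Icc (0:ℝ) t) := by
    have h1 : IntegrableOn (fun s => φ (s - τ s) * |k s|) (Icc (0:ℝ) t) :=
      IntegrableOn.continuousOn_mul (hgcont.mono hsubt)
        (habs.mono_set (Icc_subset_Icc (by linarith) htT)) isCompact_Icc
    apply h1.congr_fun _ measurableSet_Icc
    intro s _
    simp only [hφdef]
    ring
  have hfII : IntervalIntegrable (fun s => Real.exp (ω * (s - τ s)) * |k s| * u (s - τ s))
      volume 0 t := by
    apply IntegrableOn.intervalIntegrable
    rwa [uIcc_of_le h0t]
  -- integrability of |k| * M
  have hMint : IntegrableOn (fun s => |k s| * M s) (Icc (0:ℝ) t) :=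
    IntegrableOn.mul_continuousOn (habs.mono_set (Icc_subset_Icc (by linarith) htT))
      (hMcont.mono hsubt) isCompact_Icc
  have hMII : IntervalIntegrable (fun s => |k s| * M s) volume 0 t := by
    apply IntegrableOn.intervalIntegrable
    rwa [uIcc_of_le h0t]
  -- pointwise bound on [0, t]
  have hpt : ∀ s ∈ Icc (0:ℝ) t,
      Real.exp (ω * (s - τ s)) * |k s| * u (s - τ s) ≤ M0 * |k s| + |k s| * M s := by
    intro s hs
    have hsT : s ∈ Icc (0:ℝ) T := hsubt hs
    obtain ⟨hτ1, hτ2⟩ := hτ s hsT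
    have heq : Real.exp (ω * (s - τ s)) * |k s| * u (s - τ s) = |k s| * φ (s - τ s) := by
      simp only [hφdef]; ring
    rw [heq]
    rcases le_total (s - τ s) 0 with hneg | hpos
    · have h1 : φ (s - τ s) ≤ M0 := hM0_ub _ ⟨by linarith [hsT.1], hneg⟩
      have h2 : |k s| * φ (s - τ s) ≤ |k s| * M0 := by
        exact mul_le_mul_of_nonneg_left h1 (abs_nonneg _)
      have h3 : 0 ≤ |k s| * M s := mul_nonneg (abs_nonneg _) (hM_nonneg s hsT)
      nlinarith [abs_nonneg (k s)]
    · have h1 : φ (s - τ s) ≤ M s :=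
        hM_ub s hsT _ ⟨max_le (by linarith) (by linarith), by linarith⟩
      have h2 : |k s| * φ (s - τ s) ≤ |k s| * M s :=
        mul_le_mul_of_nonneg_left h1 (abs_nonneg _)
      nlinarith [abs_nonneg (k s)]
  -- pointwise bound past τbar
  have hpt2 : ∀ s ∈ Icc τbar t,
      Real.exp (ω * (s - τ s)) * |k s| * u (s - τ s) ≤ |k s| * M s := by
    intro s hs
    have hsT : s ∈ Icc (0:ℝ) T := ⟨le_trans hτbar.le hs.1, hs.2.trans htT⟩
    obtain ⟨hτ1, hτ2⟩ := hτ s hsT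
    have heq : Real.exp (ω * (s - τ s)) * |k s| * u (s - τ s) = |k s| * φ (s - τ s) := by
      simp only [hφdef]; ring
    rw [heq]
    have h1 : φ (s - τ s) ≤ M s :=
      hM_ub s hsT _ ⟨max_le (by linarith [hs.1]) (by linarith [hs.1]), by linarith⟩
    exact mul_le_mul_of_nonneg_left h1 (abs_nonneg _)
  rcases le_total t τbar with hcase | hcase
  · -- t ≤ τbar : single interval
    have hkII0t : IntervalIntegrable (fun s => |k s|) volume 0 t := hkII 0 t hτbarT h0t htT
    have hRHSII : IntervalIntegrable (fun s => M0 * |k s| + |k s| * M s) volume 0 t :=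
      (hkII0t.const_mul M0).add hMII
    have hmono : (∫ s in (0:ℝ)..t, Real.exp (ω * (s - τ s)) * |k s| * u (s - τ s)) ≤
        ∫ s in (0:ℝ)..t, (M0 * |k s| + |k s| * M s) :=
      integral_mono_on h0t hfII hRHSII hpt
    have hsplit : (∫ s in (0:ℝ)..t, (M0 * |k s| + |k s| * M s)) =
        M0 * (∫ s in (0:ℝ)..t, |k s|) + ∫ s in (0:ℝ)..t, |k s| * M s := by
      rw [integral_add (hkII0t.const_mul M0) hMII, intervalIntegral.integral_const_mul]
    -- ∫₀ᵗ |k| ≤ ∫_{t-τbar}^t |k| < K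
    have hII1 : IntervalIntegrable (fun s => |k s|) volume (t - τbar) 0 :=
      hkII (t - τbar) 0 (by linarith) (by linarith) hT.le
    have hadd : (∫ s in (t - τbar)..(0:ℝ), |k s|) + (∫ s in (0:ℝ)..t, |k s|) =
        ∫ s in (t - τbar)..t, |k s| :=
      integral_add_adjacent_intervals hII1 hkII0t
    have hpos1 : 0 ≤ ∫ s in (t - τbar)..(0:ℝ), |k s| :=
      integral_nonneg (by linarith) (fun x _ => abs_nonneg _)
    have hlt : (∫ s in (0:ℝ)..t, |k s|) < K := by
      have := hkK t h0t htT
      linarith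
    have hle : M0 * (∫ s in (0:ℝ)..t, |k s|) ≤ M0 * K :=
      mul_le_mul_of_nonneg_left hlt.le hM0_nonneg
    calc (∫ s in (0:ℝ)..t, Real.exp (ω * (s - τ s)) * |k s| * u (s - τ s))
        ≤ M0 * (∫ s in (0:ℝ)..t, |k s|) + ∫ s in (0:ℝ)..t, |k s| * M s := by
          rw [← hsplit]; exact hmono
      _ ≤ K * M0 + ∫ s in (0:ℝ)..t, |k s| * M s := by rw [mul_comm K M0]; linarith
  · -- τbar ≤ t : split at τbar
    have hfII1 : IntervalIntegrable (fun s => Real.exp (ω * (s - τ s)) * |k s| * u (s - τ s))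
        volume 0 τbar := hfII.mono_set (by
          rw [uIcc_of_le hτbar.le, uIcc_of_le h0t]
          exact Icc_subset_Icc le_rfl hcase)
    have hfII2 : IntervalIntegrable (fun s => Real.exp (ω * (s - τ s)) * |k s| * u (s - τ s))
        volume τbar t := hfII.mono_set (by
          rw [uIcc_of_le hcase, uIcc_of_le h0t]
          exact Icc_subset_Icc hτbar.le le_rfl)
    have hMII1 : IntervalIntegrable (fun s => |k s| * M s) volume 0 τbar :=
      hMII.mono_set (by
        rw [uIcc_of_le hτbar.le, uIcc_of_le h0t]
        exact Icc_subset_Icc le_rfl hcase)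
    have hMII2 : IntervalIntegrable (fun s => |k s| * M s) volume τbar t :=
      hMII.mono_set (by
        rw [uIcc_of_le hcase, uIcc_of_le h0t]
        exact Icc_subset_Icc hτbar.le le_rfl)
    have hkII1 : IntervalIntegrable (fun s => |k s|) volume 0 τbar :=
      hkII 0 τbar hτbarT hτbar.le (hcase.trans htT)
    have hfsplit : (∫ s in (0:ℝ)..t, Real.exp (ω * (s - τ s)) * |k s| * u (s - τ s)) =
        (∫ s in (0:ℝ)..τbar, Real.exp (ω * (s - τ s)) * |k s| * u (s - τ s)) +
        ∫ s in τbar..t, Real.exp (ω * (s - τ s)) * |k s| * u (s - τ s) :=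
      (integral_add_adjacent_intervals hfII1 hfII2).symm
    have hMsplit : (∫ s in (0:ℝ)..t, |k s| * M s) =
        (∫ s in (0:ℝ)..τbar, |k s| * M s) + ∫ s in τbar..t, |k s| * M s :=
      (integral_add_adjacent_intervals hMII1 hMII2).symm
    have hmono1 : (∫ s in (0:ℝ)..τbar, Real.exp (ω * (s - τ s)) * |k s| * u (s - τ s)) ≤
        M0 * (∫ s in (0:ℝ)..τbar, |k s|) + ∫ s in (0:ℝ)..τbar, |k s| * M s := by
      have := integral_mono_on hτbar.le hfII1 ((hkII1.const_mul M0).add hMII1)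
        (fun x hx => hpt x ⟨hx.1, hx.2.trans hcase⟩)
      rwa [integral_add (hkII1.const_mul M0) hMII1, intervalIntegral.integral_const_mul] at this
    have hmono2 : (∫ s in τbar..t, Real.exp (ω * (s - τ s)) * |k s| * u (s - τ s)) ≤
        ∫ s in τbar..t, |k s| * M s :=
      integral_mono_on hcase hfII2 hMII2 hpt2
    have hlt : (∫ s in (0:ℝ)..τbar, |k s|) < K := by
      have := hkK τbar hτbar.le (hcase.trans htT)
      rwa [sub_self] at this
    have hle : M0 * (∫ s in (0:ℝ)..τbar, |k s|) ≤ M0 * K :=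
      mul_le_mul_of_nonneg_left hlt.le hM0_nonneg
    rw [hfsplit, hMsplit, mul_comm K M0]
    linarith
end
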